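/- arXiv:2005.07499 — 2 statements merged into one kernel-verified Lean document; each statement's English description precedes it below -/
import Mathlib

section
/- Let A = P₁ − R₁ + S₁ = P₂ − R₂ + S₂ be two double proper weak regular splittings of a semi-monotone matrix A ∈ ℝ^{m×n}, and let A = P₃ − R₃ + S₃ be a double proper regular splitting with N(S₃) ⊇ N(P₃), R(S₃) ⊆ R(P₃), I − S₃Pᵢ† nonsingular and Âᵢ† ≥ 0 for i = 1, 2, where Â₁ = (I − S₃P₁†)A and Â₂ = (I − S₃P₂†)A. Setting P̂₁ = P̂₂ = P₃, R̂₁ = R₃ − S₃P₁†R₁, R̂₂ = R₃ − S₃P₂†R₂, if P̂₁†Â₁ ≥ P̂₂†Â₂ and P̂₁†R̂₁ ≥ P̂₂†R̂₂, then ρ(W₁₃) ≤ ρ(W₂₃) < 1. -/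
open Matrix Filter Topology
open scoped NNReal ENNReal

/-- Spectral radius of a real square matrix: the maximum modulus of its complex eigenvalues. -/
noncomputable def specRad {ι : Type*} [Fintype ι] [DecidableEq ι] (M : Matrix ι ι ℝ) : ℝ :=
  sSup ((fun z : ℂ => ‖z‖) '' spectrum ℂ (M.map Complex.ofReal))

namespace TG

attribute [local instance] Matrix.linftyOpNormedRing Matrix.linftyOpNormedAlgebra

variable {ι : Type*} [Fintype ι] [DecidableEq ι]

lemma exists_eigvec {M : Matrix ι ι ℂ} {lam : ℂ} (h : lam ∈ spectrum ℂ M) :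
    ∃ v : ι → ℂ, v ≠ 0 ∧ M *ᵥ v = lam • v := by
  rw [spectrum.mem_iff, Matrix.isUnit_iff_isUnit_det, isUnit_iff_ne_zero, not_not] at h
  obtain ⟨v, hv0, hv⟩ := (Matrix.exists_mulVec_eq_zero_iff).2 h
  refine ⟨v, hv0, ?_⟩
  have : (algebraMap ℂ (Matrix ι ι ℂ) lam) *ᵥ v - M *ᵥ v = 0 := by
    rw [← Matrix.sub_mulVec, hv]
  have h2 : (algebraMap ℂ (Matrix ι ι ℂ) lam) *ᵥ v = lam • v := by
    rw [Algebra.algebraMap_eq_smul_one, Matrix.smul_mulVec, Matrix.one_mulVec]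
  rw [h2, sub_eq_zero] at this
  exact this.symm

lemma spectrum_isEmpty [IsEmpty ι] (M : Matrix ι ι ℂ) : spectrum ℂ M = ∅ := by
  haveI : Subsingleton (Matrix ι ι ℂ) := ⟨fun a b => by ext i j; exact isEmptyElim i⟩
  ext z
  simp only [Set.mem_empty_iff_false, iff_false, spectrum.mem_iff, not_not]
  exact isUnit_of_subsingleton _

lemma specRad_isEmpty [IsEmpty ι] (M : Matrix ι ι ℝ) : specRad M = 0 := by
  rw [specRad, spectrum_isEmpty, Set.image_empty, Real.sSup_empty]

lemma bddAbove_abs_spec (M : Matrix ι ι ℝ) :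
    BddAbove ((fun z : ℂ => ‖z‖) '' spectrum ℂ (M.map Complex.ofReal)) := by
  have := (spectrum.isCompact (𝕜 := ℂ) (M.map Complex.ofReal)).image continuous_norm
  exact this.bddAbove

lemma abs_le_specRad {M : Matrix ι ι ℝ} {lam : ℂ}
    (h : lam ∈ spectrum ℂ (M.map Complex.ofReal)) : ‖lam‖ ≤ specRad M :=
  le_csSup (bddAbove_abs_spec M) ⟨lam, h, rfl⟩

lemma exists_abs_eq_specRad [Nonempty ι] (M : Matrix ι ι ℝ) :
    ∃ lam ∈ spectrum ℂ (M.map Complex.ofReal), ‖lam‖ = specRad M := by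
  have hne : (spectrum ℂ (M.map Complex.ofReal)).Nonempty := spectrum.nonempty _
  have hcpt := (spectrum.isCompact (𝕜 := ℂ) (M.map Complex.ofReal)).image continuous_norm
  have hmem := hcpt.sSup_mem (hne.image _)
  obtain ⟨lam, hlam, he⟩ := hmem
  exact ⟨lam, hlam, he⟩

lemma specRad_nonneg [Nonempty ι] (M : Matrix ι ι ℝ) : 0 ≤ specRad M := by
  obtain ⟨lam, hlam, he⟩ := exists_abs_eq_specRad M
  rw [← he]; exact norm_nonneg _

lemma specRad_lt_one {M : Matrix ι ι ℝ}
    (h : ∀ lam ∈ spectrum ℂ (M.map Complex.ofReal), ‖lam‖ < 1) : specRad M < 1 := by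
  cases isEmpty_or_nonempty ι with
  | inl hemp => rw [specRad_isEmpty]; norm_num
  | inr hne =>
    obtain ⟨lam, hlam, he⟩ := exists_abs_eq_specRad M
    rw [← he]; exact h lam hlam


lemma mulVec_mono {M : Matrix ι ι ℝ} (hM : ∀ i j, 0 ≤ M i j) {u w : ι → ℝ}
    (huw : ∀ i, u i ≤ w i) : ∀ i, (M *ᵥ u) i ≤ (M *ᵥ w) i := by
  intro i
  exact Finset.sum_le_sum fun j _ => mul_le_mul_of_nonneg_left (huw j) (hM i j)

lemma pow_entries_nonneg {M : Matrix ι ι ℝ} (hM : ∀ i j, 0 ≤ M i j) :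
    ∀ t, ∀ i j, 0 ≤ (M ^ t) i j := by
  intro t
  induction t with
  | zero => intro i j; simp [Matrix.one_apply]; positivity
  | succ t ih =>
    intro i j
    rw [pow_succ]
    exact Finset.sum_nonneg fun l _ => mul_nonneg (ih i l) (hM l j)

lemma subeigen_pow {M : Matrix ι ι ℝ} (hM : ∀ i j, 0 ≤ M i j) {c : ℝ} (hc : 0 ≤ c)
    {z : ι → ℝ} (hz : ∀ i, 0 ≤ z i) (h : ∀ i, c * z i ≤ (M *ᵥ z) i) :
    ∀ t i, c ^ t * z i ≤ ((M ^ t) *ᵥ z) i := by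
  intro t
  induction t with
  | zero => intro i; simp [Matrix.one_mulVec]
  | succ t ih =>
    intro i
    have h1 : ((M ^ (t+1)) *ᵥ z) i = (M *ᵥ ((M ^ t) *ᵥ z)) i := by
      rw [pow_succ', ← Matrix.mulVec_mulVec]
    rw [h1]
    have h2 : (M *ᵥ (fun j => c ^ t * z j)) i ≤ (M *ᵥ ((M ^ t) *ᵥ z)) i :=
      mulVec_mono hM (fun j => ih j) i
    refine le_trans ?_ h2
    have h3 : (M *ᵥ (fun j => c ^ t * z j)) i = c ^ t * (M *ᵥ z) i := by
      simp only [Matrix.mulVec, dotProduct]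
      rw [Finset.mul_sum]
      exact Finset.sum_congr rfl fun j _ => by ring
    rw [h3, pow_succ, mul_assoc, mul_comm c (z i)]
    refine mul_le_mul_of_nonneg_left ?_ (pow_nonneg hc t)
    rw [mul_comm (z i) c]
    exact h i

lemma le_specRad_of_subeigen (M : Matrix ι ι ℝ) (hM : ∀ i j, 0 ≤ M i j) {c : ℝ} (hc : 0 ≤ c)
    (z : ι → ℝ) (hz : ∀ i, 0 ≤ z i) (hz0 : z ≠ 0) (h : ∀ i, c * z i ≤ (M *ᵥ z) i) :
    c ≤ specRad M := by
  have hne : Nonempty ι := by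
    by_contra hemp
    exact hz0 (funext fun i => absurd (Nonempty.intro i) hemp)
  rcases eq_or_lt_of_le hc with rfl | hcpos
  · exact specRad_nonneg M
  -- pick index with z i0 > 0
  obtain ⟨i0, hi0⟩ : ∃ i0, 0 < z i0 := by
    by_contra hno
    push_neg at hno
    exact hz0 (funext fun i => le_antisymm (hno i) (hz i))
  set Z : ℝ := ∑ j, z j with hZ
  have hzZ : ∀ j, z j ≤ Z := fun j =>
    Finset.single_le_sum (fun i _ => hz i) (Finset.mem_univ j)
  have hZpos : 0 < Z := lt_of_lt_of_le hi0 (hzZ i0)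
  set d : ℝ := z i0 / Z with hd
  have hdpos : 0 < d := div_pos hi0 hZpos
  have hd1 : d ≤ 1 := by
    rw [hd, div_le_one hZpos]; exact hzZ i0
  -- norm bound : for all t, c^t * d ≤ ‖(M.map ofReal)^t‖
  have hnorm : ∀ t : ℕ, c ^ t * d ≤ ‖(M.map Complex.ofReal) ^ t‖ := by
    intro t
    have h1 : c ^ t * z i0 ≤ ((M ^ t) *ᵥ z) i0 := subeigen_pow hM hc hz h t i0
    have h2 : ((M ^ t) *ᵥ z) i0 ≤ (∑ j, (M ^ t) i0 j) * Z := by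
      rw [Finset.sum_mul]
      refine Finset.sum_le_sum fun j _ => ?_
      exact mul_le_mul (le_refl _) (hzZ j) (hz j) (pow_entries_nonneg hM t i0 j)
    have h3 : (∑ j, (M ^ t) i0 j) ≤ ‖(M.map Complex.ofReal) ^ t‖ := by
      have hmap : (M.map Complex.ofReal) ^ t = (M ^ t).map Complex.ofReal := by
        have := map_pow (Complex.ofRealHom.mapMatrix (m := ι)) M t
        exact this.symm
      rw [hmap, Matrix.linfty_opNorm_def]
      have hrow : (∑ j, (M ^ t) i0 j) = ∑ j, ‖((M ^ t).map Complex.ofReal) i0 j‖ := by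
        refine Finset.sum_congr rfl fun j _ => ?_
        simp [Matrix.map_apply, Complex.norm_real, Real.norm_eq_abs, abs_of_nonneg (pow_entries_nonneg hM t i0 j)]
      rw [hrow]
      have : ∀ i, (∑ j, ‖((M ^ t).map Complex.ofReal) i j‖₊ : ℝ≥0) ≤
          Finset.univ.sup fun i => ∑ j, ‖((M ^ t).map Complex.ofReal) i j‖₊ :=
        fun i => Finset.le_sup (f := fun i => ∑ j, ‖((M ^ t).map Complex.ofReal) i j‖₊) (Finset.mem_univ i)
      calc (∑ j, ‖((M ^ t).map Complex.ofReal) i0 j‖)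
          = ((∑ j, ‖((M ^ t).map Complex.ofReal) i0 j‖₊ : ℝ≥0) : ℝ) := by push_cast; rfl
        _ ≤ _ := by exact_mod_cast this i0
    calc c ^ t * d = (c ^ t * z i0) / Z := by rw [hd]; ring
      _ ≤ (((M ^ t) *ᵥ z) i0) / Z := by apply div_le_div_of_nonneg_right h1 hZpos.le
      _ ≤ ((∑ j, (M ^ t) i0 j) * Z) / Z := by apply div_le_div_of_nonneg_right h2 hZpos.le
      _ = ∑ j, (M ^ t) i0 j := by field_simp
      _ ≤ _ := h3
  -- Gelfand's formula gives the lower bound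
  set a := M.map Complex.ofReal with ha
  have hgel := spectrum.pow_norm_pow_one_div_tendsto_nhds_spectralRadius a
  have hfin : spectralRadius ℂ a ≠ ⊤ :=
    ((spectrum.spectralRadius_le_nnnorm a).trans_lt ENNReal.coe_lt_top).ne
  set r : ℝ := (spectralRadius ℂ a).toReal with hr
  have htr : Tendsto (fun t : ℕ => ‖a ^ t‖ ^ (1 / (t:ℝ))) atTop (𝓝 r) := by
    have := (ENNReal.tendsto_toReal hfin).comp hgel
    refine this.congr fun t => ?_
    simp only [Function.comp_apply]
    exact ENNReal.toReal_ofReal (Real.rpow_nonneg (norm_nonneg _) _)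
  have hlow : Tendsto (fun t : ℕ => c * d ^ (1 / (t:ℝ))) atTop (𝓝 c) := by
    have h0 : Tendsto (fun t : ℕ => Real.log d * (1 / (t:ℝ))) atTop (𝓝 0) := by
      have := tendsto_one_div_atTop_nhds_zero_nat.const_mul (Real.log d)
      simpa using this
    have h1 : Tendsto (fun t : ℕ => d ^ (1 / (t:ℝ))) atTop (𝓝 1) := by
      have hcomp := (Real.continuous_exp.tendsto 0).comp h0
      rw [Real.exp_zero] at hcomp
      refine hcomp.congr fun t => ?_
      simp only [Function.comp_apply]
      rw [Real.rpow_def_of_pos hdpos]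
    have := h1.const_mul c
    simpa using this
  have hev : ∀ᶠ t : ℕ in atTop, c * d ^ (1 / (t:ℝ)) ≤ ‖a ^ t‖ ^ (1 / (t:ℝ)) := by
    filter_upwards [eventually_ge_atTop 1] with t ht
    have htne : (t:ℝ) ≠ 0 := Nat.cast_ne_zero.2 (by omega)
    have hE : c * d ^ (1 / (t:ℝ)) = (c ^ t * d) ^ (1 / (t:ℝ)) := by
      rw [Real.mul_rpow (pow_nonneg hc t) hdpos.le]
      congr 1
      rw [← Real.rpow_natCast c t, ← Real.rpow_mul hc, mul_one_div_cancel htne, Real.rpow_one]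
    rw [hE]
    exact Real.rpow_le_rpow (mul_nonneg (pow_nonneg hc t) hdpos.le) (hnorm t)
      (by positivity)
  have hcr : c ≤ r := le_of_tendsto_of_tendsto hlow htr hev
  have hrs : r ≤ specRad M := by
    have hsup : spectralRadius ℂ a ≤ ENNReal.ofReal (specRad M) := by
      rw [spectralRadius]
      refine iSup₂_le fun lam hlam => ?_
      rw [← ENNReal.ofReal_coe_nnreal, coe_nnnorm]
      refine ENNReal.ofReal_le_ofReal ?_
      exact abs_le_specRad hlam
    have := ENNReal.toReal_mono ENNReal.ofReal_ne_top hsup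
    rwa [ENNReal.toReal_ofReal (specRad_nonneg M)] at this
  exact hcr.trans hrs

lemma blocks_subeigen {k : ℕ} (T U : Matrix (Fin k) (Fin k) ℝ)
    (hT : ∀ i j, 0 ≤ T i j) (hU : ∀ i j, 0 ≤ U i j) {lam : ℂ}
    (hlam : lam ∈ spectrum ℂ ((Matrix.fromBlocks T U 1 0 : Matrix (Fin k ⊕ Fin k) (Fin k ⊕ Fin k) ℝ).map Complex.ofReal)) :
    ∃ z : Fin k → ℝ, (∀ i, 0 ≤ z i) ∧ z ≠ 0 ∧
      ∀ i, (‖lam‖)^2 * z i ≤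
        ∑ j, (‖lam‖ * T i j + U i j) * z j := by
  obtain ⟨v, hv0, hv⟩ := exists_eigvec hlam
  set x : Fin k → ℂ := fun i => v (Sum.inl i) with hx
  set y : Fin k → ℂ := fun i => v (Sum.inr i) with hy
  have hvelim : v = Sum.elim x y := by
    funext i; cases i with
    | inl i => rfl
    | inr i => rfl
  have hmap : (Matrix.fromBlocks T U 1 0 : Matrix (Fin k ⊕ Fin k) (Fin k ⊕ Fin k) ℝ).map Complex.ofReal =
      (Matrix.fromBlocks (T.map Complex.ofReal) (U.map Complex.ofReal) 1 0 :
        Matrix (Fin k ⊕ Fin k) (Fin k ⊕ Fin k) ℂ) := by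
    rw [Matrix.fromBlocks_map, Matrix.map_one _ Complex.ofReal_zero Complex.ofReal_one,
      Matrix.map_zero _ Complex.ofReal_zero]
  rw [hmap, hvelim, Matrix.fromBlocks_mulVec] at hv
  have h1 : ∀ i, (T.map Complex.ofReal *ᵥ x) i + (U.map Complex.ofReal *ᵥ y) i = lam * x i := by
    intro i
    have := congrFun hv (Sum.inl i)
    simpa using this
  have h2 : ∀ i, x i = lam * y i := by
    intro i
    have := congrFun hv (Sum.inr i)
    simpa using this
  refine ⟨fun i => ‖y i‖, fun i => norm_nonneg _, ?_, ?_⟩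
  · intro hzero
    have hy0 : y = 0 := by
      funext i
      have := congrFun hzero i
      simpa using this
    have hx0 : x = 0 := by
      funext i
      rw [h2 i, hy0]; simp
    apply hv0
    rw [hvelim, hx0, hy0]
    funext i; cases i <;> simp
  · intro i
    have key : lam * lam * y i = (T.map Complex.ofReal *ᵥ x) i + (U.map Complex.ofReal *ᵥ y) i := by
      rw [h1 i, h2 i]; ring
    have hXj : ∀ j, ‖x j‖ = ‖lam‖ * ‖y j‖ := fun j => by
      rw [h2 j, norm_mul]
    have habs : ‖lam * lam * y i‖ ≤
        ∑ j, (‖lam‖ * T i j + U i j) * ‖y j‖ := by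
      rw [key]
      have hsum : (T.map Complex.ofReal *ᵥ x) i + (U.map Complex.ofReal *ᵥ y) i
          = ∑ j, ((T i j : ℂ) * x j + (U i j : ℂ) * y j) := by
        simp [Matrix.mulVec, dotProduct, Matrix.map_apply, Finset.sum_add_distrib]
      rw [hsum]
      refine le_trans (norm_sum_le _ _) ?_
      refine Finset.sum_le_sum fun j _ => ?_
      refine le_trans (norm_add_le _ _) ?_
      rw [norm_mul, norm_mul]
      have e1 : ‖(T i j : ℂ)‖ = T i j := by
        rw [Complex.norm_real, Real.norm_eq_abs, abs_of_nonneg (hT i j)]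
      have e2 : ‖(U i j : ℂ)‖ = U i j := by
        rw [Complex.norm_real, Real.norm_eq_abs, abs_of_nonneg (hU i j)]
      rw [e1, e2, hXj j]
      exact le_of_eq (by ring)
    calc (‖lam‖)^2 * ‖y i‖ = ‖lam * lam * y i‖ := by
          rw [norm_mul, norm_mul]; ring
      _ ≤ _ := habs

lemma mul_entries_nonneg {a b c : ℕ} {A : Matrix (Fin a) (Fin b) ℝ} {B : Matrix (Fin b) (Fin c) ℝ}
    (hA : ∀ i j, 0 ≤ A i j) (hB : ∀ i j, 0 ≤ B i j) : ∀ i j, 0 ≤ (A * B) i j := by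
  intro i j
  rw [Matrix.mul_apply]
  exact Finset.sum_nonneg fun l _ => mul_nonneg (hA i l) (hB l j)

lemma mul_entries_nonpos_np {a b c : ℕ} {A : Matrix (Fin a) (Fin b) ℝ} {B : Matrix (Fin b) (Fin c) ℝ}
    (hA : ∀ i j, 0 ≤ A i j) (hB : ∀ i j, B i j ≤ 0) : ∀ i j, (A * B) i j ≤ 0 := by
  intro i j
  rw [Matrix.mul_apply]
  exact Finset.sum_nonpos fun l _ => mul_nonpos_of_nonneg_of_nonpos (hA i l) (hB l j)

lemma mul_entries_nonpos_pn {a b c : ℕ} {A : Matrix (Fin a) (Fin b) ℝ} {B : Matrix (Fin b) (Fin c) ℝ}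
    (hA : ∀ i j, A i j ≤ 0) (hB : ∀ i j, 0 ≤ B i j) : ∀ i j, (A * B) i j ≤ 0 := by
  intro i j
  rw [Matrix.mul_apply]
  exact Finset.sum_nonpos fun l _ => mul_nonpos_of_nonpos_of_nonneg (hA i l) (hB l j)

lemma mul_entries_nonneg_nn {a b c : ℕ} {A : Matrix (Fin a) (Fin b) ℝ} {B : Matrix (Fin b) (Fin c) ℝ}
    (hA : ∀ i j, A i j ≤ 0) (hB : ∀ i j, B i j ≤ 0) : ∀ i j, 0 ≤ (A * B) i j := by
  intro i j
  rw [Matrix.mul_apply]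
  exact Finset.sum_nonneg fun l _ => by nlinarith [hA i l, hB l j]

/-- Entrywise powers of `M` tend to zero, given `M * Y = Y - X`, `M = X * G`. -/
lemma pow_tendsto_zero {k m' : ℕ} (M : Matrix (Fin k) (Fin k) ℝ) (hM : ∀ i j, 0 ≤ M i j)
    (X Y : Matrix (Fin k) (Fin m') ℝ) (G : Matrix (Fin m') (Fin k) ℝ)
    (hX : ∀ i j, 0 ≤ X i j) (hY : ∀ i j, 0 ≤ Y i j)
    (hMY : M * Y = Y - X) (hMX : M = X * G) :
    ∀ i j, Tendsto (fun t => (M ^ t) i j) atTop (𝓝 0) := by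
  have hMt : ∀ t, ∀ i j, 0 ≤ (M ^ t) i j := pow_entries_nonneg hM
  have htel : ∀ K : ℕ, ∑ t ∈ Finset.range K, M ^ t * X = Y - M ^ K * Y := by
    intro K
    induction K with
    | zero => simp
    | succ K ih =>
      rw [Finset.sum_range_succ, ih]
      have : M ^ (K+1) * Y = M ^ K * Y - M ^ K * X := by
        rw [pow_succ, Matrix.mul_assoc, hMY, Matrix.mul_sub]
      rw [this]
      abel
  -- entrywise summability
  have hXto : ∀ (i : Fin k) (j : Fin m'), Tendsto (fun t => (M ^ t * X : Matrix (Fin k) (Fin m') ℝ) i j) atTop (𝓝 0) := by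
    intro i j
    have hnn : ∀ t, 0 ≤ (M ^ t * X : Matrix (Fin k) (Fin m') ℝ) i j := fun t => mul_entries_nonneg (hMt t) hX i j
    have hbd : ∀ K, ∑ t ∈ Finset.range K, (M ^ t * X : Matrix (Fin k) (Fin m') ℝ) i j ≤ Y i j := by
      intro K
      have := congrFun (congrFun (htel K) i) j
      rw [Matrix.sum_apply] at this
      rw [this]
      have : 0 ≤ (M ^ K * Y) i j := mul_entries_nonneg (hMt K) hY i j
      simp only [Matrix.sub_apply]
      linarith
    exact (summable_of_sum_range_le hnn hbd).tendsto_atTop_zero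
  intro i j
  have hshift : Tendsto (fun t => (M ^ (t+1)) i j) atTop (𝓝 0) := by
    have heq : ∀ t, (M ^ (t+1)) i j = ∑ l : Fin m', (M ^ t * X : Matrix (Fin k) (Fin m') ℝ) i l * G l j := by
      intro t
      rw [pow_succ, hMX, ← Matrix.mul_assoc, Matrix.mul_apply]
    rw [show (fun t => (M ^ (t+1)) i j) = fun t => ∑ l : Fin m', (M ^ t * X : Matrix (Fin k) (Fin m') ℝ) i l * G l j from funext heq]
    have : Tendsto (fun t => ∑ l : Fin m', (M ^ t * X : Matrix (Fin k) (Fin m') ℝ) i l * G l j) atTop (𝓝 (∑ l : Fin m', 0 * G l j)) :=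
      tendsto_finset_sum _ fun l _ => (hXto i l).mul_const (G l j)
    simpa using this
  exact (tendsto_add_atTop_iff_nat 1).1 hshift

lemma pow_entries_le {k : ℕ} {A B : Matrix (Fin k) (Fin k) ℝ} (hA : ∀ i j, 0 ≤ A i j)
    (hAB : ∀ i j, A i j ≤ B i j) : ∀ t, ∀ i j, (A ^ t) i j ≤ (B ^ t) i j := by
  have hB : ∀ i j, 0 ≤ B i j := fun i j => le_trans (hA i j) (hAB i j)
  intro t
  induction t with
  | zero => intro i j; simp
  | succ t ih =>
    intro i j
    rw [pow_succ, pow_succ, Matrix.mul_apply, Matrix.mul_apply]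
    refine Finset.sum_le_sum fun l _ => ?_
    calc (A ^ t) i l * A l j ≤ (A ^ t) i l * B l j :=
          mul_le_mul_of_nonneg_left (hAB l j) (pow_entries_nonneg hA t i l)
      _ ≤ (B ^ t) i l * B l j := mul_le_mul_of_nonneg_right (ih i l) (hB l j)

/-- If entrywise powers of `T + U` tend to zero then all eigenvalues of the companion
block matrix have modulus `< 1`. -/
lemma blocks_abs_lt_one {k : ℕ} (T U : Matrix (Fin k) (Fin k) ℝ)
    (hT : ∀ i j, 0 ≤ T i j) (hU : ∀ i j, 0 ≤ U i j)
    (hpow : ∀ i j, Tendsto (fun t => ((T + U) ^ t) i j) atTop (𝓝 0)) :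
    ∀ lam ∈ spectrum ℂ ((Matrix.fromBlocks T U 1 0 :
      Matrix (Fin k ⊕ Fin k) (Fin k ⊕ Fin k) ℝ).map Complex.ofReal), ‖lam‖ < 1 := by
  intro lam hlam
  by_contra hge
  push_neg at hge
  set c := ‖lam‖ with hc
  obtain ⟨z, hz, hz0, hineq⟩ := blocks_subeigen T U hT hU hlam
  have hcz : ∀ i, c * z i ≤ ((T + U) *ᵥ z) i := by
    intro i
    have h1 : c * (c * z i) ≤ c * ((T + U) *ᵥ z) i := by
      have : c ^ 2 * z i ≤ ∑ j, (c * T i j + U i j) * z j := hineq i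
      have h2 : ∑ j, (c * T i j + U i j) * z j ≤ ∑ j, c * ((T + U) i j * z j) := by
        refine Finset.sum_le_sum fun j _ => ?_
        have hU' : U i j * z j ≤ c * (U i j * z j) := by
          nlinarith [mul_nonneg (hU i j) (hz j)]
        simp only [Matrix.add_apply]
        nlinarith [mul_nonneg (hT i j) (hz j)]
      calc c * (c * z i) = c ^ 2 * z i := by ring
        _ ≤ ∑ j, (c * T i j + U i j) * z j := this
        _ ≤ ∑ j, c * ((T + U) i j * z j) := h2
        _ = c * ((T + U) *ᵥ z) i := by
            simp [Matrix.mulVec, dotProduct, Finset.mul_sum]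
    have hcpos : 0 < c := lt_of_lt_of_le one_pos hge
    exact le_of_mul_le_mul_left h1 hcpos
  obtain ⟨i0, hi0⟩ : ∃ i0, 0 < z i0 := by
    by_contra hno
    push_neg at hno
    exact hz0 (funext fun i => le_antisymm (hno i) (hz i))
  have hTU : ∀ i j, 0 ≤ (T + U) i j := fun i j => by
    simp only [Matrix.add_apply]; exact add_nonneg (hT i j) (hU i j)
  have hsub := subeigen_pow hTU (le_trans zero_le_one hge) hz hcz
  have hto : Tendsto (fun t => (((T + U) ^ t) *ᵥ z) i0) atTop (𝓝 0) := by
    have : Tendsto (fun t => ∑ j, ((T + U) ^ t) i0 j * z j) atTop (𝓝 (∑ j : Fin k, 0 * z j)) :=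
      tendsto_finset_sum _ fun j _ => (hpow i0 j).mul_const (z j)
    simpa [Matrix.mulVec, dotProduct] using this
  have hev : ∀ᶠ t : ℕ in atTop, (((T + U) ^ t) *ᵥ z) i0 < z i0 :=
    hto.eventually_lt_const hi0
  obtain ⟨t, ht⟩ := hev.exists
  have : z i0 ≤ (((T + U) ^ t) *ᵥ z) i0 := by
    have h1 : c ^ t * z i0 ≤ (((T + U) ^ t) *ᵥ z) i0 := hsub t i0
    have h2 : (1:ℝ) ≤ c ^ t := one_le_pow₀ hge
    nlinarith
  linarith

lemma eq_of_mulVec_eq {a b : ℕ} {M N : Matrix (Fin a) (Fin b) ℝ}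
    (h : ∀ v, M *ᵥ v = N *ᵥ v) : M = N := by
  ext i j
  have := congrFun (h (Pi.single j 1)) i
  simpa [Matrix.mulVec_single] using this

lemma symproj_eq_of_ker {a : ℕ} {P Q : Matrix (Fin a) (Fin a) ℝ}
    (hPs : Pᵀ = P) (hQs : Qᵀ = Q) (hP : P * P = P) (hQ : Q * Q = Q)
    (hker : ∀ v, P *ᵥ v = 0 ↔ Q *ᵥ v = 0) : P = Q := by
  have key : ∀ (R S : Matrix (Fin a) (Fin a) ℝ), S * S = S → (∀ v, S *ᵥ v = 0 → R *ᵥ v = 0) →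
      R * S = R := by
    intro R S hS hk
    refine eq_of_mulVec_eq fun v => ?_
    have h0 : S *ᵥ (v - S *ᵥ v) = 0 := by
      rw [Matrix.mulVec_sub, Matrix.mulVec_mulVec, hS, sub_self]
    have h1 := hk _ h0
    rw [Matrix.mulVec_sub, Matrix.mulVec_mulVec, sub_eq_zero] at h1
    exact h1.symm
  have hPQ : P * Q = P := key P Q hQ (fun v hv => (hker v).2 hv)
  have hQP : Q * P = Q := key Q P hP (fun v hv => (hker v).1 hv)
  calc P = Pᵀ := hPs.symm
    _ = (P * Q)ᵀ := by rw [hPQ]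
    _ = Qᵀ * Pᵀ := Matrix.transpose_mul _ _
    _ = Q * P := by rw [hPs, hQs]
    _ = Q := hQP

lemma symproj_eq_of_range {a : ℕ} {P Q : Matrix (Fin a) (Fin a) ℝ}
    (hPs : Pᵀ = P) (hQs : Qᵀ = Q) (hP : P * P = P) (hQ : Q * Q = Q)
    (hr : ∀ v, (∃ w, P *ᵥ w = v) ↔ (∃ w, Q *ᵥ w = v)) : P = Q := by
  have key : ∀ (R S : Matrix (Fin a) (Fin a) ℝ), S * S = S →
      (∀ v, (∃ w, R *ᵥ w = v) → (∃ w, S *ᵥ w = v)) → S * R = R := by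
    intro R S hS hk
    refine eq_of_mulVec_eq fun v => ?_
    obtain ⟨w, hw⟩ := hk (R *ᵥ v) ⟨v, rfl⟩
    calc (S * R) *ᵥ v = S *ᵥ (R *ᵥ v) := (Matrix.mulVec_mulVec _ _ _).symm
      _ = S *ᵥ (S *ᵥ w) := by rw [hw]
      _ = (S * S) *ᵥ w := Matrix.mulVec_mulVec _ _ _
      _ = S *ᵥ w := by rw [hS]
      _ = R *ᵥ v := hw
  have hQP : Q * P = P := key P Q hQ (fun v hv => (hr v).1 hv)
  have hPQ : P * Q = Q := key Q P hP (fun v hv => (hr v).2 hv)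
  calc P = Pᵀ := hPs.symm
    _ = (Q * P)ᵀ := by rw [hQP]
    _ = Pᵀ * Qᵀ := Matrix.transpose_mul _ _
    _ = P * Q := by rw [hPs, hQs]
    _ = Q := hPQ

lemma ker_proj_iff {a b : ℕ} {P : Matrix (Fin a) (Fin b) ℝ} {X : Matrix (Fin b) (Fin a) ℝ}
    (hP : P * X * P = P) : ∀ v, (X * P) *ᵥ v = 0 ↔ P *ᵥ v = 0 := by
  intro v
  constructor
  · intro h
    have h1 : P *ᵥ v = (P * (X * P)) *ᵥ v := by rw [← Matrix.mul_assoc, hP]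
    rw [h1, ← Matrix.mulVec_mulVec, h, Matrix.mulVec_zero]
  · intro h
    rw [← Matrix.mulVec_mulVec, h, Matrix.mulVec_zero]

lemma range_proj_iff {a b : ℕ} {P : Matrix (Fin a) (Fin b) ℝ} {X : Matrix (Fin b) (Fin a) ℝ}
    (hP : P * X * P = P) : ∀ v, (∃ w, (P * X) *ᵥ w = v) ↔ (∃ w, P *ᵥ w = v) := by
  intro v
  constructor
  · rintro ⟨w, rfl⟩
    exact ⟨X *ᵥ w, by rw [Matrix.mulVec_mulVec]⟩
  · rintro ⟨w, rfl⟩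
    refine ⟨P *ᵥ w, ?_⟩
    rw [Matrix.mulVec_mulVec, Matrix.mul_assoc, ← Matrix.mul_assoc, hP]

lemma induced_identity {m n : ℕ} (A P R S P₃ R₃ S₃ : Matrix (Fin m) (Fin n) ℝ)
    (X X₃ : Matrix (Fin n) (Fin m) ℝ)
    (hX : P * X * P = P)
    (hsplit : A = P - R + S) (hsplit₃ : A = P₃ - R₃ + S₃)
    (hker : ∀ v, P *ᵥ v = 0 → S₃ *ᵥ v = 0) :
    X₃ * ((1 - S₃ * X) * A) =
      X₃ * P₃ - ((X₃ * R₃ - X₃ * S₃ * X * R) + X₃ * S₃ * X * S) := by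
  have hSXP : S₃ * X * P = S₃ := by
    refine eq_of_mulVec_eq fun v => ?_
    have hPw : P *ᵥ (v - (X * P) *ᵥ v) = 0 := by
      rw [Matrix.mulVec_sub, Matrix.mulVec_mulVec, ← Matrix.mul_assoc, hX, sub_self]
    have hSw := hker _ hPw
    rw [Matrix.mulVec_sub, Matrix.mulVec_mulVec, sub_eq_zero, ← Matrix.mul_assoc] at hSw
    exact hSw.symm
  have expand : (1 - S₃ * X) * A = A - S₃ * X * A := by
    rw [Matrix.sub_mul, Matrix.one_mul]
  have hXA : S₃ * X * A = S₃ - S₃ * X * R + S₃ * X * S := by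
    calc S₃ * X * A = S₃ * X * (P - R + S) := by rw [← hsplit]
      _ = S₃ * X * P - S₃ * X * R + S₃ * X * S := by rw [Matrix.mul_add, Matrix.mul_sub]
      _ = S₃ - S₃ * X * R + S₃ * X * S := by rw [hSXP]
  calc X₃ * ((1 - S₃ * X) * A) = X₃ * A - X₃ * (S₃ * X * A) := by
        rw [expand, Matrix.mul_sub]
    _ = X₃ * (P₃ - R₃ + S₃) - X₃ * (S₃ - S₃ * X * R + S₃ * X * S) := by rw [← hsplit₃, hXA]
    _ = X₃ * P₃ - ((X₃ * R₃ - X₃ * S₃ * X * R) + X₃ * S₃ * X * S) := by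
        simp only [Matrix.mul_sub, Matrix.mul_add, Matrix.mul_assoc]
        abel

end TG


/-- `X` satisfies the four Penrose equations for `A`, i.e. `X` is the Moore-Penrose
inverse of `A`. -/
def IsMP {m n : ℕ} (A : Matrix (Fin m) (Fin n) ℝ) (X : Matrix (Fin n) (Fin m) ℝ) : Prop :=
  A * X * A = A ∧ X * A * X = X ∧ (A * X)ᵀ = A * X ∧ (X * A)ᵀ = X * A

/-- Entrywise comparison of matrices: `MatLE A B` means `A ≤ B` entrywise. -/
def MatLE {m n : ℕ} (A B : Matrix (Fin m) (Fin n) ℝ) : Prop := ∀ i j, A i j ≤ B i j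

theorem tgads_pair_comparison_W13_W23_induced {m n : ℕ}
    (A P₁ R₁ S₁ P₂ R₂ S₂ P₃ R₃ S₃ : Matrix (Fin m) (Fin n) ℝ)
    (XA X₁ X₂ X₃ Xhat₁ Xhat₂ : Matrix (Fin n) (Fin m) ℝ)
    (hX₁ : IsMP P₁ X₁)
    (hX₂ : IsMP P₂ X₂)
    (hX₃ : IsMP P₃ X₃)
    (hXA : IsMP A XA)
    (hsemi : MatLE 0 XA)
    (hsplit₁ : A = P₁ - R₁ + S₁)
    (hrange₁ : LinearMap.range (P₁).mulVecLin = LinearMap.range (A).mulVecLin)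
    (hker₁ : LinearMap.ker (P₁).mulVecLin = LinearMap.ker (A).mulVecLin)
    (hwr₁a : MatLE 0 X₁)
    (hwr₁b : MatLE 0 (X₁ * R₁))
    (hwr₁c : MatLE (X₁ * S₁) 0)
    (hsplit₂ : A = P₂ - R₂ + S₂)
    (hrange₂ : LinearMap.range (P₂).mulVecLin = LinearMap.range (A).mulVecLin)
    (hker₂ : LinearMap.ker (P₂).mulVecLin = LinearMap.ker (A).mulVecLin)
    (hwr₂a : MatLE 0 X₂)
    (hwr₂b : MatLE 0 (X₂ * R₂))
    (hwr₂c : MatLE (X₂ * S₂) 0)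
    (hsplit₃ : A = P₃ - R₃ + S₃)
    (hrange₃ : LinearMap.range (P₃).mulVecLin = LinearMap.range (A).mulVecLin)
    (hker₃ : LinearMap.ker (P₃).mulVecLin = LinearMap.ker (A).mulVecLin)
    (hreg₃a : MatLE 0 X₃)
    (hreg₃b : MatLE 0 R₃)
    (hreg₃c : MatLE S₃ 0)
    (hNS3 : LinearMap.ker (P₃).mulVecLin ≤ LinearMap.ker (S₃).mulVecLin)
    (hRS3 : LinearMap.range (S₃).mulVecLin ≤ LinearMap.range (P₃).mulVecLin)
    (hunit1 : IsUnit (1 - S₃ * X₁))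
    (hunit2 : IsUnit (1 - S₃ * X₂))
    (hXhat1 : IsMP ((1 - S₃ * X₁) * A) Xhat₁)
    (hXhat2 : IsMP ((1 - S₃ * X₂) * A) Xhat₂)
    (hXhat1pos : MatLE 0 Xhat₁)
    (hXhat2pos : MatLE 0 Xhat₂)
    (hc1 : MatLE (X₃ * ((1 - S₃ * X₂) * A)) (X₃ * ((1 - S₃ * X₁) * A)))
    (hc2 : MatLE (X₃ * (R₃ - S₃ * X₂ * R₂)) (X₃ * (R₃ - S₃ * X₁ * R₁)))
    : specRad (Matrix.fromBlocks (X₃ * R₃ - X₃ * S₃ * X₁ * R₁) (X₃ * S₃ * X₁ * S₁) 1 0) ≤ specRad (Matrix.fromBlocks (X₃ * R₃ - X₃ * S₃ * X₂ * R₂) (X₃ * S₃ * X₂ * S₂) 1 0) ∧ specRad (Matrix.fromBlocks (X₃ * R₃ - X₃ * S₃ * X₂ * R₂) (X₃ * S₃ * X₂ * S₂) 1 0) < 1 := by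
  classical
  rcases Nat.eq_zero_or_pos n with rfl | hn
  · refine ⟨?_, ?_⟩
    · rw [TG.specRad_isEmpty, TG.specRad_isEmpty]
    · rw [TG.specRad_isEmpty]; norm_num
  haveI hne : Nonempty (Fin n ⊕ Fin n) := ⟨Sum.inl ⟨0, hn⟩⟩
  -- entrywise sign data
  have hX₃nn : ∀ i j, 0 ≤ X₃ i j := fun i j => by simpa using hreg₃a i j
  have hR₃nn : ∀ i j, 0 ≤ R₃ i j := fun i j => by simpa using hreg₃b i j
  have hS₃np : ∀ i j, S₃ i j ≤ 0 := fun i j => by simpa using hreg₃c i j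
  have hYnn : ∀ i j, 0 ≤ Xhat₂ i j := fun i j => by simpa using hXhat2pos i j
  have hX₁R₁ : ∀ i j, 0 ≤ (X₁ * R₁) i j := fun i j => by simpa using hwr₁b i j
  have hX₁S₁ : ∀ i j, (X₁ * S₁) i j ≤ 0 := fun i j => by simpa using hwr₁c i j
  have hX₂R₂ : ∀ i j, 0 ≤ (X₂ * R₂) i j := fun i j => by simpa using hwr₂b i j
  have hX₂S₂ : ∀ i j, (X₂ * S₂) i j ≤ 0 := fun i j => by simpa using hwr₂c i j
  have hX₃S₃ : ∀ i j, (X₃ * S₃) i j ≤ 0 := TG.mul_entries_nonpos_np hX₃nn hS₃np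
  have hX₃R₃ : ∀ i j, 0 ≤ (X₃ * R₃) i j := TG.mul_entries_nonneg hX₃nn hR₃nn
  set T₁ := X₃ * R₃ - X₃ * S₃ * X₁ * R₁ with hT₁def
  set U₁ := X₃ * S₃ * X₁ * S₁ with hU₁def
  set T₂ := X₃ * R₃ - X₃ * S₃ * X₂ * R₂ with hT₂def
  set U₂ := X₃ * S₃ * X₂ * S₂ with hU₂def
  have ha1 : X₃ * S₃ * X₁ * R₁ = (X₃ * S₃) * (X₁ * R₁) := Matrix.mul_assoc _ _ _
  have hb1 : X₃ * S₃ * X₁ * S₁ = (X₃ * S₃) * (X₁ * S₁) := Matrix.mul_assoc _ _ _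
  have ha2 : X₃ * S₃ * X₂ * R₂ = (X₃ * S₃) * (X₂ * R₂) := Matrix.mul_assoc _ _ _
  have hb2 : X₃ * S₃ * X₂ * S₂ = (X₃ * S₃) * (X₂ * S₂) := Matrix.mul_assoc _ _ _
  have hT₁nn : ∀ i j, 0 ≤ T₁ i j := by
    intro i j
    have h2 := TG.mul_entries_nonpos_pn hX₃S₃ hX₁R₁ i j
    rw [hT₁def, ha1]
    simp only [Matrix.sub_apply]
    have h1 := hX₃R₃ i j
    linarith
  have hU₁nn : ∀ i j, 0 ≤ U₁ i j := by
    intro i j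
    rw [hU₁def, hb1]
    exact TG.mul_entries_nonneg_nn hX₃S₃ hX₁S₁ i j
  have hT₂nn : ∀ i j, 0 ≤ T₂ i j := by
    intro i j
    have h2 := TG.mul_entries_nonpos_pn hX₃S₃ hX₂R₂ i j
    rw [hT₂def, ha2]
    simp only [Matrix.sub_apply]
    have h1 := hX₃R₃ i j
    linarith
  have hU₂nn : ∀ i j, 0 ≤ U₂ i j := by
    intro i j
    rw [hU₂def, hb2]
    exact TG.mul_entries_nonneg_nn hX₃S₃ hX₂S₂ i j
  -- kernel transfer
  have hkerS : ∀ (P' : Matrix (Fin m) (Fin n) ℝ),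
      LinearMap.ker P'.mulVecLin = LinearMap.ker A.mulVecLin →
      ∀ v, P' *ᵥ v = 0 → S₃ *ᵥ v = 0 := by
    intro P' hk v hv
    have h1 : v ∈ LinearMap.ker P'.mulVecLin := by
      rw [LinearMap.mem_ker, Matrix.mulVecLin_apply]; exact hv
    rw [hk, ← hker₃] at h1
    have h2 := hNS3 h1
    rwa [LinearMap.mem_ker, Matrix.mulVecLin_apply] at h2
  set B₂ := (1 - S₃ * X₂) * A with hBdef
  have i₁ : X₃ * ((1 - S₃ * X₁) * A) = X₃ * P₃ - (T₁ + U₁) := by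
    rw [hT₁def, hU₁def]
    exact TG.induced_identity A P₁ R₁ S₁ P₃ R₃ S₃ X₁ X₃ hX₁.1 hsplit₁ hsplit₃ (hkerS P₁ hker₁)
  have i₂ : X₃ * B₂ = X₃ * P₃ - (T₂ + U₂) := by
    rw [hBdef, hT₂def, hU₂def]
    exact TG.induced_identity A P₂ R₂ S₂ P₃ R₃ S₃ X₂ X₃ hX₂.1 hsplit₂ hsplit₃ (hkerS P₂ hker₂)
  have hM12 : ∀ i j, (T₁ + U₁) i j ≤ (T₂ + U₂) i j := by
    intro i j
    have h := hc1 i j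
    rw [i₁, i₂] at h
    simp only [Matrix.sub_apply] at h
    linarith
  have hT21 : ∀ i j, T₂ i j ≤ T₁ i j := by
    intro i j
    have h := hc2 i j
    have e₁ : X₃ * (R₃ - S₃ * X₁ * R₁) = T₁ := by
      rw [hT₁def, Matrix.mul_sub]
      congr 1
      rw [← Matrix.mul_assoc, ← Matrix.mul_assoc]
    have e₂ : X₃ * (R₃ - S₃ * X₂ * R₂) = T₂ := by
      rw [hT₂def, Matrix.mul_sub]
      congr 1
      rw [← Matrix.mul_assoc, ← Matrix.mul_assoc]
    rw [e₁, e₂] at h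
    exact h
  -- kernel equivalences
  have hkB : ∀ v, B₂ *ᵥ v = 0 ↔ A *ᵥ v = 0 := by
    intro v
    constructor
    · intro h
      obtain ⟨u, hu⟩ := hunit2
      have h2 : (↑u⁻¹ : Matrix (Fin m) (Fin m) ℝ) *ᵥ (B₂ *ᵥ v) = 0 := by
        rw [h, Matrix.mulVec_zero]
      rw [Matrix.mulVec_mulVec, hBdef, ← Matrix.mul_assoc, ← hu, u.inv_mul,
        Matrix.one_mul] at h2
      exact h2
    · intro h
      rw [hBdef, ← Matrix.mulVec_mulVec, h, Matrix.mulVec_zero]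
  have hkPA : ∀ v, P₃ *ᵥ v = 0 ↔ A *ᵥ v = 0 := by
    intro v
    constructor
    · intro h
      have h1 : v ∈ LinearMap.ker P₃.mulVecLin := by
        rw [LinearMap.mem_ker, Matrix.mulVecLin_apply]; exact h
      rw [hker₃] at h1
      rwa [LinearMap.mem_ker, Matrix.mulVecLin_apply] at h1
    · intro h
      have h1 : v ∈ LinearMap.ker A.mulVecLin := by
        rw [LinearMap.mem_ker, Matrix.mulVecLin_apply]; exact h
      rw [← hker₃] at h1
      rwa [LinearMap.mem_ker, Matrix.mulVecLin_apply] at h1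
  have hE_eq : X₃ * P₃ = Xhat₂ * B₂ := by
    refine TG.symproj_eq_of_ker hX₃.2.2.2 hXhat2.2.2.2 ?_ ?_ ?_
    · rw [← Matrix.mul_assoc, hX₃.2.1]
    · rw [← Matrix.mul_assoc, hXhat2.2.1]
    · intro v
      rw [TG.ker_proj_iff hX₃.1 v, TG.ker_proj_iff hXhat2.1 v, hkPA v, hkB v]
  -- range equivalences
  have hrangeB : LinearMap.range B₂.mulVecLin = LinearMap.range P₃.mulVecLin := by
    have hle : LinearMap.range B₂.mulVecLin ≤ LinearMap.range P₃.mulVecLin := by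
      rintro x ⟨v, rfl⟩
      have hBv : B₂.mulVecLin v = A *ᵥ v - S₃ *ᵥ (X₂ *ᵥ (A *ᵥ v)) := by
        rw [Matrix.mulVecLin_apply, hBdef, Matrix.sub_mul, Matrix.one_mul, Matrix.sub_mulVec]
        congr 1
        rw [Matrix.mulVec_mulVec, Matrix.mulVec_mulVec, Matrix.mul_assoc]
      rw [hBv]
      refine Submodule.sub_mem _ ?_ (hRS3 ⟨X₂ *ᵥ (A *ᵥ v), rfl⟩)
      have hmem : A *ᵥ v ∈ LinearMap.range A.mulVecLin := ⟨v, rfl⟩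
      rwa [← hrange₃] at hmem
    obtain ⟨u, hu⟩ := hunit2
    have h1 : ((1 - S₃ * X₂) * (↑u⁻¹ : Matrix (Fin m) (Fin m) ℝ)) = 1 := by
      rw [← hu, u.mul_inv]
    have h2 : ((↑u⁻¹ : Matrix (Fin m) (Fin m) ℝ) * (1 - S₃ * X₂)) = 1 := by
      rw [← hu, u.inv_mul]
    set e : (Fin m → ℝ) ≃ₗ[ℝ] (Fin m → ℝ) :=
      LinearEquiv.ofLinear (1 - S₃ * X₂).mulVecLin
        ((↑u⁻¹ : Matrix (Fin m) (Fin m) ℝ)).mulVecLin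
        (by rw [← Matrix.mulVecLin_mul, h1, Matrix.mulVecLin_one])
        (by rw [← Matrix.mulVecLin_mul, h2, Matrix.mulVecLin_one]) with hedef
    have hcomp : B₂.mulVecLin = (e : (Fin m → ℝ) →ₗ[ℝ] (Fin m → ℝ)).comp A.mulVecLin := by
      rw [hBdef, Matrix.mulVecLin_mul]
      rfl
    have hfr : Module.finrank ℝ (LinearMap.range B₂.mulVecLin)
        = Module.finrank ℝ (LinearMap.range A.mulVecLin) := by
      rw [hcomp, LinearMap.range_comp]
      exact LinearEquiv.finrank_map_eq e _
    refine Submodule.eq_of_le_of_finrank_le hle ?_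
    rw [hrange₃, ← hfr]
  have hrB : ∀ v, (∃ w, B₂ *ᵥ w = v) ↔ (∃ w, P₃ *ᵥ w = v) := by
    intro v
    constructor
    · rintro ⟨w, rfl⟩
      have h1 : B₂ *ᵥ w ∈ LinearMap.range B₂.mulVecLin := ⟨w, Matrix.mulVecLin_apply _ _⟩
      rw [hrangeB] at h1
      obtain ⟨w', hw'⟩ := h1
      exact ⟨w', by rw [← Matrix.mulVecLin_apply]; exact hw'⟩
    · rintro ⟨w, rfl⟩
      have h1 : P₃ *ᵥ w ∈ LinearMap.range P₃.mulVecLin := ⟨w, Matrix.mulVecLin_apply _ _⟩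
      rw [← hrangeB] at h1
      obtain ⟨w', hw'⟩ := h1
      exact ⟨w', by rw [← Matrix.mulVecLin_apply]; exact hw'⟩
  have hBY_eq : B₂ * Xhat₂ = P₃ * X₃ := by
    refine TG.symproj_eq_of_range hXhat2.2.2.1 hX₃.2.2.1 ?_ ?_ ?_
    · rw [← Matrix.mul_assoc, hXhat2.1]
    · rw [← Matrix.mul_assoc, hX₃.1]
    · intro v
      rw [TG.range_proj_iff hXhat2.1 v, TG.range_proj_iff hX₃.1 v]
      exact hrB v
  have hEY : (X₃ * P₃) * Xhat₂ = Xhat₂ := by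
    rw [hE_eq]
    exact hXhat2.2.1
  have hXBY : X₃ * B₂ * Xhat₂ = X₃ := by
    rw [Matrix.mul_assoc, hBY_eq, ← Matrix.mul_assoc, hX₃.2.1]
  have hM2 : T₂ + U₂ = X₃ * P₃ - X₃ * B₂ := by
    rw [i₂]
    abel
  have hM₂Y : (T₂ + U₂) * Xhat₂ = Xhat₂ - X₃ := by
    calc (T₂ + U₂) * Xhat₂ = (X₃ * P₃) * Xhat₂ - (X₃ * B₂) * Xhat₂ := by
          rw [hM2, Matrix.sub_mul]
      _ = Xhat₂ - X₃ := by rw [hEY, hXBY]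
  have hM₂X : T₂ + U₂ = X₃ * (P₃ * (T₂ + U₂)) := by
    have h1 : T₂ + U₂ = X₃ * (R₃ - S₃ * (X₂ * R₂) + S₃ * (X₂ * S₂)) := by
      rw [hT₂def, hU₂def]
      simp only [Matrix.mul_sub, Matrix.mul_add, Matrix.mul_assoc]
    calc T₂ + U₂ = X₃ * (R₃ - S₃ * (X₂ * R₂) + S₃ * (X₂ * S₂)) := h1
      _ = (X₃ * P₃ * X₃) * (R₃ - S₃ * (X₂ * R₂) + S₃ * (X₂ * S₂)) := by rw [hX₃.2.1]
      _ = X₃ * (P₃ * (X₃ * (R₃ - S₃ * (X₂ * R₂) + S₃ * (X₂ * S₂)))) := by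
          rw [Matrix.mul_assoc, Matrix.mul_assoc]
      _ = X₃ * (P₃ * (T₂ + U₂)) := by rw [← h1]
  have hM₂nn : ∀ i j, 0 ≤ (T₂ + U₂) i j := by
    intro i j
    simp only [Matrix.add_apply]
    exact add_nonneg (hT₂nn i j) (hU₂nn i j)
  have hM₁nn : ∀ i j, 0 ≤ (T₁ + U₁) i j := by
    intro i j
    simp only [Matrix.add_apply]
    exact add_nonneg (hT₁nn i j) (hU₁nn i j)
  have hpow₂ := TG.pow_tendsto_zero (T₂ + U₂) hM₂nn X₃ Xhat₂ (P₃ * (T₂ + U₂)) hX₃nn hYnn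
    hM₂Y hM₂X
  have hpow₁ : ∀ i j, Filter.Tendsto (fun t => ((T₁ + U₁) ^ t) i j) Filter.atTop (nhds 0) := by
    intro i j
    exact squeeze_zero (fun t => TG.pow_entries_nonneg hM₁nn t i j)
      (fun t => TG.pow_entries_le hM₁nn hM12 t i j) (hpow₂ i j)
  have hlt₂ := TG.blocks_abs_lt_one T₂ U₂ hT₂nn hU₂nn hpow₂
  have hlt₁ := TG.blocks_abs_lt_one T₁ U₁ hT₁nn hU₁nn hpow₁
  refine ⟨?_, TG.specRad_lt_one hlt₂⟩
  obtain ⟨lam, hlam, habs⟩ := TG.exists_abs_eq_specRad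
    (Matrix.fromBlocks T₁ U₁ 1 0 : Matrix (Fin n ⊕ Fin n) (Fin n ⊕ Fin n) ℝ)
  set c := ‖lam‖ with hcdef
  have hc0 : 0 ≤ c := norm_nonneg _
  have hc1' : c < 1 := hlt₁ lam hlam
  obtain ⟨z, hz, hz0, hineq⟩ := TG.blocks_subeigen T₁ U₁ hT₁nn hU₁nn hlam
  have hstep : ∀ i, c * (c * z i) ≤ ∑ j, (c * T₂ i j + U₂ i j) * z j := by
    intro i
    have h1 : c ^ 2 * z i ≤ ∑ j, (c * T₁ i j + U₁ i j) * z j := hineq i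
    have h2 : ∑ j, (c * T₁ i j + U₁ i j) * z j ≤ ∑ j, (c * T₂ i j + U₂ i j) * z j := by
      refine Finset.sum_le_sum fun j _ => mul_le_mul_of_nonneg_right ?_ (hz j)
      have e : c * T₁ i j = c * T₂ i j + c * (T₁ i j - T₂ i j) := by ring
      have h3 : c * (T₁ i j - T₂ i j) ≤ T₁ i j - T₂ i j :=
        mul_le_of_le_one_left (sub_nonneg.2 (hT21 i j)) hc1'.le
      have h4 := hM12 i j
      simp only [Matrix.add_apply] at h4
      linarith
    calc c * (c * z i) = c ^ 2 * z i := by ring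
      _ ≤ _ := h1.trans h2
  set Z : (Fin n ⊕ Fin n) → ℝ := Sum.elim (fun i => c * z i) z with hZdef
  have hZnn : ∀ I, 0 ≤ Z I := by
    intro I
    rcases I with i | i
    · simpa [hZdef] using mul_nonneg hc0 (hz i)
    · simpa [hZdef] using hz i
  have hZ0 : Z ≠ 0 := by
    intro hcon
    apply hz0
    funext i
    have := congrFun hcon (Sum.inr i)
    simpa [hZdef] using this
  have hWnn : ∀ I J, 0 ≤ (Matrix.fromBlocks T₂ U₂ 1 0 :
      Matrix (Fin n ⊕ Fin n) (Fin n ⊕ Fin n) ℝ) I J := by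
    intro I J
    rcases I with i | i <;> rcases J with j | j
    · simpa using hT₂nn i j
    · simpa using hU₂nn i j
    · simp only [Matrix.fromBlocks_apply₂₁, Matrix.one_apply]
      split <;> norm_num
    · simp
  have hsubZ : ∀ I, c * Z I ≤ ((Matrix.fromBlocks T₂ U₂ 1 0 :
      Matrix (Fin n ⊕ Fin n) (Fin n ⊕ Fin n) ℝ) *ᵥ Z) I := by
    intro I
    rw [hZdef, Matrix.fromBlocks_mulVec]
    rcases I with i | i
    · simp only [Sum.elim_inl, Sum.elim_comp_inl, Sum.elim_comp_inr, Pi.add_apply]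
      have hTv : (T₂ *ᵥ (fun j => c * z j)) i + (U₂ *ᵥ z) i
          = ∑ j, (c * T₂ i j + U₂ i j) * z j := by
        simp only [Matrix.mulVec, dotProduct, ← Finset.sum_add_distrib]
        exact Finset.sum_congr rfl fun j _ => by ring
      rw [hTv]
      exact hstep i
    · simp only [Sum.elim_inr, Sum.elim_comp_inl, Sum.elim_comp_inr, Pi.add_apply,
        Matrix.one_mulVec, Matrix.zero_mulVec, Pi.zero_apply, add_zero, Sum.elim_inl]
      exact le_refl _
  have hle := TG.le_specRad_of_subeigen
    (Matrix.fromBlocks T₂ U₂ 1 0 : Matrix (Fin n ⊕ Fin n) (Fin n ⊕ Fin n) ℝ)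
    hWnn hc0 Z hZnn hZ0 hsubZ
  calc specRad (Matrix.fromBlocks T₁ U₁ 1 0 : Matrix (Fin n ⊕ Fin n) (Fin n ⊕ Fin n) ℝ)
      = c := habs.symm
    _ ≤ _ := hle
end

section
/- Let A = P₁ − R₁ + S₁ = P₂ − R₂ + S₂ = P₃ − R₃ + S₃ = P₄ − R₄ + S₄ be four double proper weak regular splittings of a semi-monotone matrix A ∈ ℝ^{m×n}. Suppose N(S₂) ⊇ N(P₂), R(S₂) ⊆ R(P₂), N(S₄) ⊇ N(P₄), R(S₄) ⊆ R(P₄), I − S₂P₁† and I − S₄P₃† are nonsingular, and Â₁† ≥ 0, Â₂† ≥ 0, where Â₁ = (I − S₂P₁†)A and Â₂ = (I − S₄P₃†)A. Setting P̂₁ = P₂, R̂₁ = R₂ − S₂P₁†R₁, P̂₂ = P₄, R̂₂ = R₄ − S₄P₃†R₃, if P̂₁†Â₁ ≥ P̂₂†Â₂ and P̂₁†R̂₁ ≥ P̂₂†R̂₂, then ρ(W₁₂) ≤ ρ(W₃₄) < 1, where W₁₂ = [[P₂†R₂ − P₂†S₂P₁†R₁, P₂†S₂P₁†S₁], [I,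 0]] and W₃₄ = [[P₄†R₄ − P₄†S₄P₃†R₃, P₄†S₄P₃†S₃], [I, 0]]. -/
open Matrix

open Filter


section Util
variable {m n p q : ℕ}

lemma mat_ext_mulVec {A B : Matrix (Fin m) (Fin n) ℝ}
    (h : ∀ x, A.mulVec x = B.mulVec x) : A = B := by
  ext i j
  have := congrFun (h (Pi.single j 1)) i
  simpa [Matrix.mulVec_single] using this

lemma ker_imp {M : Matrix (Fin m) (Fin n) ℝ} {N : Matrix (Fin p) (Fin n) ℝ}
    (h : LinearMap.ker M.mulVecLin ≤ LinearMap.ker N.mulVecLin)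
    {Z : Matrix (Fin n) (Fin q) ℝ} (hZ : M * Z = 0) : N * Z = 0 := by
  apply mat_ext_mulVec
  intro x
  have h1 : M.mulVec (Z.mulVec x) = 0 := by
    rw [Matrix.mulVec_mulVec, hZ]; simp
  have h2 : Z.mulVec x ∈ LinearMap.ker N.mulVecLin := h (by simpa using h1)
  simpa [Matrix.mulVec_mulVec] using h2

lemma range_imp {P S : Matrix (Fin m) (Fin n) ℝ} {X : Matrix (Fin n) (Fin m) ℝ}
    (h : LinearMap.range S.mulVecLin ≤ LinearMap.range P.mulVecLin)
    (hPXP : P * X * P = P) : P * X * S = S := by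
  apply mat_ext_mulVec
  intro x
  obtain ⟨w, hw⟩ := h (LinearMap.mem_range.2 ⟨x, rfl⟩)
  simp only [Matrix.mulVecLin_apply] at hw
  calc (P * X * S).mulVec x = (P*X).mulVec (S.mulVec x) := by rw [← Matrix.mulVec_mulVec]
    _ = (P*X).mulVec (P.mulVec w) := by rw [hw]
    _ = (P*X*P).mulVec w := by rw [Matrix.mulVec_mulVec]
    _ = S.mulVec x := by rw [hPXP, hw]

lemma mul_nonneg_of_nonpos_nonpos' {a b : ℝ} (ha : a ≤ 0) (hb : b ≤ 0) : 0 ≤ a * b := by nlinarith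

lemma matle_mul {A : Matrix (Fin m) (Fin n) ℝ} {C : Matrix (Fin n) (Fin p) ℝ}
    (h1 : MatLE 0 A) (h2 : MatLE 0 C) : MatLE 0 (A * C) := by
  intro i j
  simp only [Matrix.zero_apply, Matrix.mul_apply]
  exact Finset.sum_nonneg fun k _ => mul_nonneg (by simpa using h1 i k) (by simpa using h2 k j)

lemma matle_mul_nonpos {A : Matrix (Fin m) (Fin n) ℝ} {C : Matrix (Fin n) (Fin p) ℝ}
    (h1 : MatLE A 0) (h2 : MatLE C 0) : MatLE 0 (A * C) := by
  intro i j
  simp only [Matrix.zero_apply, Matrix.mul_apply]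
  exact Finset.sum_nonneg fun k _ =>
    mul_nonneg_of_nonpos_nonpos' (by simpa using h1 i k) (by simpa using h2 k j)

lemma matle_mul_mixed {A : Matrix (Fin m) (Fin n) ℝ} {C : Matrix (Fin n) (Fin p) ℝ}
    (h1 : MatLE A 0) (h2 : MatLE 0 C) : MatLE (A * C) 0 := by
  intro i j
  simp only [Matrix.zero_apply, Matrix.mul_apply]
  exact Finset.sum_nonpos fun k _ =>
    mul_nonpos_of_nonpos_of_nonneg (by simpa using h1 i k) (by simpa using h2 k j)

lemma matle_pow {A : Matrix (Fin n) (Fin n) ℝ} (h : MatLE 0 A) (k : ℕ) : MatLE 0 (A ^ k) := by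
  induction k with
  | zero => intro i j; simp [Matrix.one_apply]; positivity
  | succ k ih => rw [pow_succ]; exact matle_mul ih h

lemma range_unit_mul (F : Matrix (Fin m) (Fin m) ℝ) (A : Matrix (Fin m) (Fin n) ℝ)
    (hF : IsUnit F)
    (hle : LinearMap.range (F * A).mulVecLin ≤ LinearMap.range A.mulVecLin) :
    LinearMap.range (F * A).mulVecLin = LinearMap.range A.mulVecLin := by
  have hcomp : (F * A).mulVecLin = F.mulVecLin ∘ₗ A.mulVecLin := Matrix.mulVecLin_mul F A
  obtain ⟨u, hu⟩ := hF
  let e : (Fin m → ℝ) ≃ₗ[ℝ] (Fin m → ℝ) :=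
    { toFun := F.mulVecLin
      map_add' := map_add _
      map_smul' := map_smul _
      invFun := (↑u⁻¹ : Matrix (Fin m) (Fin m) ℝ).mulVecLin
      left_inv := by
        intro x
        simp only [Matrix.mulVecLin_apply, Matrix.mulVec_mulVec, ← hu]
        rw [Units.inv_mul]; simp
      right_inv := by
        intro x
        simp only [Matrix.mulVecLin_apply, Matrix.mulVec_mulVec, ← hu]
        rw [Units.mul_inv]; simp }
  have hmap : LinearMap.range (F * A).mulVecLin
      = Submodule.map (e : (Fin m → ℝ) →ₗ[ℝ] (Fin m → ℝ)) (LinearMap.range A.mulVecLin) := by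
    rw [hcomp, LinearMap.range_comp]
    rfl
  have hfr : Module.finrank ℝ (Submodule.map (e : (Fin m → ℝ) →ₗ[ℝ] (Fin m → ℝ)) (LinearMap.range A.mulVecLin))
      = Module.finrank ℝ (LinearMap.range A.mulVecLin) := LinearEquiv.finrank_map_eq e _
  refine Submodule.eq_of_le_of_finrank_le hle ?_
  rw [← hmap] at hfr
  omega

end Util

section CORE
variable {m n : ℕ}

lemma core (A Pa Ra Sa Pb Rb Sb : Matrix (Fin m) (Fin n) ℝ)
    (Xa Xb Z : Matrix (Fin n) (Fin m) ℝ)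
    (hXa : IsMP Pa Xa) (hXb : IsMP Pb Xb)
    (hsa : A = Pa - Ra + Sa) (hsb : A = Pb - Rb + Sb)
    (hkaA : LinearMap.ker Pa.mulVecLin = LinearMap.ker A.mulVecLin)
    (hrbA : LinearMap.range Pb.mulVecLin = LinearMap.range A.mulVecLin)
    (hkbA : LinearMap.ker Pb.mulVecLin = LinearMap.ker A.mulVecLin)
    (hNSb : LinearMap.ker Pb.mulVecLin ≤ LinearMap.ker Sb.mulVecLin)
    (hRSb : LinearMap.range Sb.mulVecLin ≤ LinearMap.range Pb.mulVecLin)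
    (hunit : IsUnit (1 - Sb * Xa))
    (hZ : IsMP ((1 - Sb * Xa) * A) Z)
    (hXbpos : MatLE 0 Xb) (hbR : MatLE 0 (Xb * Rb)) (hbS : MatLE (Xb * Sb) 0)
    (haR : MatLE 0 (Xa * Ra)) (haS : MatLE (Xa * Sa) 0) (hZpos : MatLE 0 Z) :
    Xb * ((1 - Sb * Xa) * A)
        = Xb * Pb - (Xb * (Rb - Sb * Xa * Ra + Sb * Xa * Sa))
      ∧ MatLE 0 (Xb * (Rb - Sb * Xa * Ra + Sb * Xa * Sa))
      ∧ (∀ (i j : Fin n), Filter.Tendsto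
          (fun k : ℕ => ((Xb * (Rb - Sb * Xa * Ra + Sb * Xa * Sa)) ^ k) i j)
          atTop (nhds 0)) := by
  set F := (1 : Matrix (Fin m) (Fin m) ℝ) - Sb * Xa with hF
  set Ahat := F * A with hAhat
  set V := Rb - Sb * Xa * Ra + Sb * Xa * Sa with hV
  set H := Xb * V with hH
  set Q := Xb * Pb with hQ
  -- s1 : Sb * Xa * Pa = Sb
  have s0 : Pa * ((1 : Matrix (Fin n) (Fin n) ℝ) - Xa * Pa) = 0 := by
    rw [Matrix.mul_sub, Matrix.mul_one, ← Matrix.mul_assoc, hXa.1, sub_self]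
  have kerPaSb : LinearMap.ker Pa.mulVecLin ≤ LinearMap.ker Sb.mulVecLin := by
    rw [hkaA, ← hkbA]; exact hNSb
  have s1' : Sb * ((1 : Matrix (Fin n) (Fin n) ℝ) - Xa * Pa) = 0 := ker_imp kerPaSb s0
  have s1 : Sb * Xa * Pa = Sb := by
    rw [Matrix.mul_sub, Matrix.mul_one, ← Matrix.mul_assoc, sub_eq_zero] at s1'
    exact s1'.symm
  -- s2 : Ahat = Pb - V
  have e0 : Sb * Xa * A = Sb - Sb * Xa * Ra + Sb * Xa * Sa := by
    calc Sb * Xa * A = Sb * Xa * (Pa - Ra) + Sb * Xa * Sa := by rw [hsa, Matrix.mul_add]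
      _ = Sb * Xa * Pa - Sb * Xa * Ra + Sb * Xa * Sa := by rw [Matrix.mul_sub]
      _ = Sb - Sb * Xa * Ra + Sb * Xa * Sa := by rw [s1]
  have s2 : Ahat = Pb - V := by
    have e1 : Ahat = A - Sb * Xa * A := by
      rw [hAhat, hF, Matrix.sub_mul, Matrix.one_mul]
    rw [e1, e0, hV]
    nth_rewrite 1 [hsb]
    abel
  -- s4, s5, s6
  have s4 : Pb * Xb * A = A := range_imp (by rw [hrbA]) hXb.1
  have s5 : Pb * Xb * Sb = Sb := range_imp hRSb hXb.1
  have s6 : Pb * Xb * Ahat = Ahat := by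
    rw [hAhat, hF, Matrix.sub_mul, Matrix.one_mul, Matrix.mul_sub, s4]
    rw [Matrix.mul_assoc Sb Xa A, ← Matrix.mul_assoc (Pb*Xb) Sb (Xa*A), s5,
      ← Matrix.mul_assoc Sb Xa A]
  -- s7 : A * (1 - Xb*Pb) = 0
  have s7' : Pb * ((1 : Matrix (Fin n) (Fin n) ℝ) - Xb * Pb) = 0 := by
    rw [Matrix.mul_sub, Matrix.mul_one, ← Matrix.mul_assoc, hXb.1, sub_self]
  have s7 : A * ((1 : Matrix (Fin n) (Fin n) ℝ) - Xb * Pb) = 0 := ker_imp (le_of_eq hkbA) s7'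
  -- s8 : V * Q = V
  have s8 : V * Q = V := by
    have hVPA : V = Pb - Ahat := by rw [s2]; abel
    have h1 : Ahat * ((1 : Matrix (Fin n) (Fin n) ℝ) - Xb * Pb) = 0 := by
      rw [hAhat, Matrix.mul_assoc, s7, Matrix.mul_zero]
    have h2 : V * ((1 : Matrix (Fin n) (Fin n) ℝ) - Xb * Pb) = 0 := by
      rw [hVPA, Matrix.sub_mul, h1, s7', sub_zero]
    rw [Matrix.mul_sub, Matrix.mul_one, sub_eq_zero] at h2
    rw [hQ, ← h2]
  -- s9 : range Ahat = range A
  have s9 : LinearMap.range Ahat.mulVecLin = LinearMap.range A.mulVecLin := by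
    apply range_unit_mul F A hunit
    rintro y ⟨x, rfl⟩
    simp only [Matrix.mulVecLin_apply]
    have hrw : (F * A).mulVec x = A.mulVec x - Sb.mulVec ((Xa * A).mulVec x) := by
      rw [hF, Matrix.sub_mul, Matrix.one_mul, Matrix.sub_mulVec]
      congr 1
      rw [Matrix.mulVec_mulVec, Matrix.mul_assoc]
    rw [hrw]
    apply Submodule.sub_mem
    · exact LinearMap.mem_range.2 ⟨x, rfl⟩
    · have hmem : Sb.mulVec ((Xa * A).mulVec x) ∈ LinearMap.range Sb.mulVecLin :=
        LinearMap.mem_range.2 ⟨(Xa * A).mulVec x, rfl⟩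
      have := hRSb hmem
      rw [hrbA] at this
      exact this
  -- s10
  have s10 : Ahat * Z * Pb = Pb := by
    refine range_imp ?_ hZ.1
    rw [s9, hrbA]
  -- s13 : Ahat * Z = Pb * Xb
  have s13 : Ahat * Z = Pb * Xb := by
    have s11 : (Pb * Xb) * (Ahat * Z) = Ahat * Z := by
      rw [← Matrix.mul_assoc, Matrix.mul_assoc Pb Xb Ahat, ← Matrix.mul_assoc, s6]
    have s12 : (Ahat * Z) * (Pb * Xb) = Pb * Xb := by
      rw [← Matrix.mul_assoc, s10]
    have hsymN : (Pb * Xb)ᵀ = Pb * Xb := hXb.2.2.1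
    have hsymM : (Ahat * Z)ᵀ = Ahat * Z := hZ.2.2.1
    calc Ahat * Z = ((Pb * Xb) * (Ahat * Z))ᵀᵀ := by rw [s11, transpose_transpose]
      _ = ((Ahat * Z)ᵀ * (Pb * Xb)ᵀ)ᵀ := by rw [Matrix.transpose_mul]
      _ = ((Ahat * Z) * (Pb * Xb))ᵀ := by rw [hsymN, hsymM]
      _ = Pb * Xb := by rw [s12, hsymN]
  -- s14
  have s14 : Xb * Ahat * Z = Xb := by
    rw [Matrix.mul_assoc, s13, ← Matrix.mul_assoc, hXb.2.1]
  -- s15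
  have s15 : Xb * Ahat = Q - H := by rw [s2, Matrix.mul_sub, hQ, hH]
  -- s16
  have s16 : H * Z = Q * Z - Xb := by
    have h := congrArg (fun M => M * Z) s15
    simp only [Matrix.sub_mul] at h
    rw [s14] at h
    rw [h]
    abel
  -- s17
  have s17 : H * Q = H := by rw [hH, Matrix.mul_assoc, s8]
  -- nonnegativity of H
  have hHpos : MatLE 0 H := by
    have h1 : MatLE 0 (Xb * Rb) := hbR
    have h2 : MatLE ((Xb * Sb) * (Xa * Ra)) 0 := matle_mul_mixed hbS haR
    have h3 : MatLE 0 ((Xb * Sb) * (Xa * Sa)) := matle_mul_nonpos hbS haS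
    have key : H = Xb * Rb - (Xb * Sb) * (Xa * Ra) + (Xb * Sb) * (Xa * Sa) := by
      rw [hH, hV, Matrix.mul_add, Matrix.mul_sub]
      simp [Matrix.mul_assoc]
    intro i j
    rw [key]
    simp only [Matrix.add_apply, Matrix.sub_apply, Matrix.zero_apply]
    have e1 := h1 i j; have e2 := h2 i j; have e3 := h3 i j
    simp only [Matrix.zero_apply] at e1 e2 e3
    linarith
  -- telescoping
  have s18 : ∀ k : ℕ, H ^ (k + 1) * Z
      = Q * Z - ∑ j ∈ Finset.range (k + 1), H ^ j * Xb := by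
    intro k
    induction k with
    | zero =>
      simp only [zero_add, pow_one, Finset.range_one, Finset.sum_singleton, pow_zero,
        Matrix.one_mul]
      exact s16
    | succ k ih =>
      have hpow : H ^ (k + 2) * Z = H * (H ^ (k + 1) * Z) := by
        rw [← Matrix.mul_assoc, ← pow_succ']
      have hmulT : H * ∑ j ∈ Finset.range (k + 1), H ^ j * Xb
          = ∑ j ∈ Finset.range (k + 1), H ^ (j + 1) * Xb := by
        rw [Matrix.mul_sum]
        refine Finset.sum_congr rfl fun j _ => ?_
        rw [← Matrix.mul_assoc, ← pow_succ']
      have hTsucc : ∑ j ∈ Finset.range (k + 2), H ^ j * Xb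
          = Xb + ∑ j ∈ Finset.range (k + 1), H ^ (j + 1) * Xb := by
        rw [Finset.sum_range_succ' (fun j => H ^ j * Xb) (k + 1)]
        simp [add_comm]
      rw [hpow, ih, Matrix.mul_sub, hmulT, ← Matrix.mul_assoc, s17, s16, hTsucc]
      abel
  -- bound on partial sums
  have hTle : ∀ (k : ℕ) (i : Fin n) (j : Fin m),
      (∑ l ∈ Finset.range (k + 1), H ^ l * Xb) i j ≤ (Q * Z) i j := by
    intro k i j
    have h1 : MatLE 0 (H ^ (k + 1) * Z) := matle_mul (matle_pow hHpos (k+1)) hZpos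
    have e := congrFun (congrFun (s18 k) i) j
    have h2 := h1 i j
    simp only [Matrix.zero_apply] at h2
    have e2 : (H ^ (k+1) * Z) i j
        = (Q * Z) i j - (∑ l ∈ Finset.range (k + 1), H ^ l * Xb) i j := by
      rw [e]; simp [Matrix.sub_apply]
    linarith
  -- entry summability
  have s20 : ∀ (i : Fin n) (j : Fin m),
      Filter.Tendsto (fun k : ℕ => (H ^ k * Xb) i j) atTop (nhds 0) := by
    intro i j
    have hf0 : ∀ k : ℕ, 0 ≤ (H ^ k * Xb) i j := by
      intro k
      have := matle_mul (matle_pow hHpos k) hXbpos i j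
      simpa using this
    have hsum : ∀ k : ℕ, ∑ l ∈ Finset.range k, (H ^ l * Xb) i j ≤ max 0 ((Q * Z) i j) := by
      intro k
      have hTsum : ∑ l ∈ Finset.range k, (H ^ l * Xb) i j
          = (∑ l ∈ Finset.range k, H ^ l * Xb) i j := by
        simp [Matrix.sum_apply]
      rw [hTsum]
      cases k with
      | zero => simp
      | succ k => exact le_max_of_le_right (hTle k i j)
    have hsummable : Summable (fun k : ℕ => (H ^ k * Xb) i j) :=
      summable_of_sum_range_le hf0 hsum
    exact hsummable.tendsto_atTop_zero
  -- powers tend to zero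
  have s21 : ∀ (i j : Fin n), Filter.Tendsto (fun k : ℕ => (H ^ k) i j) atTop (nhds 0) := by
    intro i j
    rw [← Filter.tendsto_add_atTop_iff_nat 1]
    have hrw : ∀ k : ℕ, (H ^ (k + 1)) i j = ∑ l, (H ^ k * Xb) i l * V l j := by
      intro k
      rw [pow_succ, hH, ← Matrix.mul_assoc, Matrix.mul_apply]
    simp only [hrw]
    have htend : Filter.Tendsto (fun k : ℕ => ∑ l, (H ^ k * Xb) i l * V l j) atTop
        (nhds (∑ l : Fin m, 0 * V l j)) := by
      apply tendsto_finset_sum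
      intro l _
      exact (s20 i l).mul_const (V l j)
    simpa using htend
  exact ⟨s15, hHpos, s21⟩

end CORE



section SPEC
attribute [local instance] Matrix.linftyOpNormedRing Matrix.linftyOpNormedAlgebra
  Matrix.linftyOpNormedAddCommGroup

variable {ι : Type*} [Fintype ι] [DecidableEq ι]

noncomputable local instance : CompleteSpace (Matrix ι ι ℂ) := FiniteDimensional.complete ℂ _

lemma spec_image_compact (M : Matrix ι ι ℝ) :
    IsCompact ((fun z : ℂ => ‖z‖) '' spectrum ℂ (M.map Complex.ofReal)) :=
  (spectrum.isCompact _).image (continuous_norm)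

lemma spec_bddAbove (M : Matrix ι ι ℝ) :
    BddAbove ((fun z : ℂ => ‖z‖) '' spectrum ℂ (M.map Complex.ofReal)) :=
  (spec_image_compact M).bddAbove

lemma specRad_of_isEmpty [IsEmpty ι] (M : Matrix ι ι ℝ) : specRad M = 0 := by
  have hsub : Subsingleton (Matrix ι ι ℂ) := by
    constructor; intro a b; ext i j; exact (IsEmpty.false i).elim
  have : spectrum ℂ (M.map Complex.ofReal) = ∅ := by
    ext z
    simp only [Set.mem_empty_iff_false, iff_false]
    intro hz
    exact (spectrum.mem_iff.mp hz) (isUnit_of_subsingleton _)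
  rw [specRad, this]
  simp [Real.sSup_empty]

lemma specRad_attained [Nonempty ι] (M : Matrix ι ι ℝ) :
    ∃ lam ∈ spectrum ℂ (M.map Complex.ofReal), ‖lam‖ = specRad M := by
  have hne : (spectrum ℂ (M.map Complex.ofReal)).Nonempty := spectrum.nonempty _
  have himg : ((fun z : ℂ => ‖z‖) '' spectrum ℂ (M.map Complex.ofReal)).Nonempty :=
    hne.image _
  have := (spec_image_compact M).sSup_mem himg
  obtain ⟨lam, hlam, h⟩ := this
  exact ⟨lam, hlam, h⟩

lemma abs_le_specRad {M : Matrix ι ι ℝ} {lam : ℂ}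
    (h : lam ∈ spectrum ℂ (M.map Complex.ofReal)) : ‖lam‖ ≤ specRad M :=
  le_csSup (spec_bddAbove M) ⟨lam, h, rfl⟩

lemma specRad_nonneg (M : Matrix ι ι ℝ) : 0 ≤ specRad M := by
  cases isEmpty_or_nonempty ι with
  | inl h => rw [specRad_of_isEmpty]
  | inr h =>
    obtain ⟨lam, _, he⟩ := specRad_attained M
    rw [← he]
    exact norm_nonneg lam

lemma eigvec_of_mem_spectrum {M : Matrix ι ι ℂ} {lam : ℂ} (h : lam ∈ spectrum ℂ M) :
    ∃ v : ι → ℂ, v ≠ 0 ∧ M.mulVec v = lam • v := by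
  have h1 : ¬IsUnit (algebraMap ℂ (Matrix ι ι ℂ) lam - M) := spectrum.mem_iff.mp h
  have h2 : (algebraMap ℂ (Matrix ι ι ℂ) lam - M).det = 0 := by
    by_contra hne
    exact h1 ((Matrix.isUnit_iff_isUnit_det _).mpr (isUnit_iff_ne_zero.mpr hne))
  obtain ⟨v, hv, hmv⟩ := (Matrix.exists_mulVec_eq_zero_iff).mpr h2
  refine ⟨v, hv, ?_⟩
  rw [Matrix.sub_mulVec] at hmv
  have halg : (algebraMap ℂ (Matrix ι ι ℂ) lam).mulVec v = lam • v := by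
    rw [Algebra.algebraMap_eq_smul_one lam, Matrix.smul_mulVec, Matrix.one_mulVec]
  rw [halg] at hmv
  exact (sub_eq_zero.mp hmv).symm

lemma entry_abs_le_nnnorm (N : Matrix ι ι ℂ) (i j : ι) : ‖N i j‖ ≤ ‖N‖ := by
  have h1 : ‖N i j‖₊ ≤ ∑ j' : ι, ‖N i j'‖₊ :=
    Finset.single_le_sum (f := fun j' => ‖N i j'‖₊) (fun j' _ => zero_le) (Finset.mem_univ j)
  have h2 : (∑ j' : ι, ‖N i j'‖₊) ≤ Finset.univ.sup fun i' : ι => ∑ j' : ι, ‖N i' j'‖₊ :=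
    Finset.le_sup (f := fun i' : ι => ∑ j' : ι, ‖N i' j'‖₊) (Finset.mem_univ i)
  have h3 : ‖N‖₊ = Finset.univ.sup fun i' : ι => ∑ j' : ι, ‖N i' j'‖₊ :=
    Matrix.linfty_opNNNorm_def N
  have h4 := (h1.trans h2)
  rw [← h3] at h4
  exact_mod_cast h4

lemma map_pow_ofReal (M : Matrix ι ι ℝ) (k : ℕ) :
    (M.map Complex.ofReal) ^ k = (M ^ k).map Complex.ofReal := by
  have h : ∀ N : Matrix ι ι ℝ, N.map Complex.ofReal
      = (Complex.ofRealHom.mapMatrix : Matrix ι ι ℝ →+* Matrix ι ι ℂ) N := fun N => rfl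
  rw [h, h, ← map_pow]

lemma pow_subeig {M : Matrix ι ι ℝ} (hM : ∀ i j, 0 ≤ M i j) {z : ι → ℝ}
    (hz : ∀ i, 0 ≤ z i) {s : ℝ} (hs : 0 ≤ s)
    (hle : ∀ i, s * z i ≤ M.mulVec z i) :
    ∀ (k : ℕ) (i : ι), s ^ k * z i ≤ (M ^ k).mulVec z i := by
  intro k
  induction k with
  | zero => intro i; simp [Matrix.one_mulVec]
  | succ k ih =>
    intro i
    have hpow : (M ^ (k+1)).mulVec z = M.mulVec ((M ^ k).mulVec z) := by
      rw [pow_succ', Matrix.mulVec_mulVec]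
    rw [hpow]
    have step1 : s ^ (k+1) * z i = s ^ k * (s * z i) := by ring
    have step2 : s ^ k * (s * z i) ≤ s ^ k * (M.mulVec z i) :=
      mul_le_mul_of_nonneg_left (hle i) (pow_nonneg hs k)
    have step3 : s ^ k * (M.mulVec z i) = ∑ j, M i j * (s ^ k * z j) := by
      simp only [Matrix.mulVec, dotProduct, Finset.mul_sum]
      refine Finset.sum_congr rfl fun j _ => by ring
    have step4 : ∑ j, M i j * (s ^ k * z j) ≤ ∑ j, M i j * ((M ^ k).mulVec z j) :=
      Finset.sum_le_sum fun j _ => mul_le_mul_of_nonneg_left (ih j) (hM i j)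
    have step5 : M.mulVec ((M ^ k).mulVec z) i = ∑ j, M i j * ((M ^ k).mulVec z j) := rfl
    rw [step1, step5]
    linarith

/-- Sub-eigenvector inequality gives a lower bound on the spectral radius. -/
lemma subeig_le_specRad [Nonempty ι] {M : Matrix ι ι ℝ} (hM : ∀ i j, 0 ≤ M i j)
    {z : ι → ℝ} (hz : ∀ i, 0 ≤ z i) {i₀ : ι} (hz0 : 0 < z i₀) {s : ℝ} (hs : 0 ≤ s)
    (hle : ∀ i, s * z i ≤ M.mulVec z i) : s ≤ specRad M := by
  by_contra hlt
  push_neg at hlt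
  set r := (specRad M + s) / 2 with hr
  have hr1 : specRad M < r := by rw [hr]; linarith
  have hr2 : r < s := by rw [hr]; linarith
  have hrpos : 0 < r := lt_of_le_of_lt (specRad_nonneg M) hr1
  set Mc := M.map Complex.ofReal with hMc
  -- Gelfand
  have hSRle : spectralRadius ℂ Mc ≤ ENNReal.ofReal (specRad M) := by
    rw [spectralRadius]
    refine iSup₂_le fun lam hlam => ?_
    have h1 : ‖lam‖ ≤ specRad M := abs_le_specRad hlam
    have h2 : ENNReal.ofReal ‖lam‖ ≤ ENNReal.ofReal (specRad M) :=
      ENNReal.ofReal_le_ofReal (by simpa using h1)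
    rwa [ofReal_norm, enorm_eq_nnnorm] at h2
  have hSRlt : spectralRadius ℂ Mc < ENNReal.ofReal r :=
    lt_of_le_of_lt hSRle (by
      rw [ENNReal.ofReal_lt_ofReal_iff hrpos]
      exact hr1)
  have hGel := spectrum.pow_nnnorm_pow_one_div_tendsto_nhds_spectralRadius Mc
  have hev : ∀ᶠ k : ℕ in atTop, (‖Mc ^ k‖₊ : ENNReal) ^ (1/(k:ℝ)) < ENNReal.ofReal r :=
    hGel.eventually_lt_const hSRlt
  obtain ⟨K, hK⟩ := hev.exists_forall_of_atTop
  -- entry bound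
  have hpow := pow_subeig hM hz hs hle
  set c := ∑ j, z j with hc
  have hczero : 0 ≤ c := Finset.sum_nonneg fun j _ => hz j
  have hbound : ∀ k : ℕ, s ^ k * z i₀ ≤ ‖Mc ^ k‖ * c := by
    intro k
    have h1 : (M ^ k).mulVec z i₀ ≤ ∑ j, ‖Mc ^ k‖ * z j := by
      have : (M ^ k).mulVec z i₀ = ∑ j, (M ^ k) i₀ j * z j := rfl
      rw [this]
      refine Finset.sum_le_sum fun j _ => ?_
      refine mul_le_mul_of_nonneg_right ?_ (hz j)
      have he : ((M ^ k) i₀ j : ℝ) ≤ ‖(Mc ^ k) i₀ j‖ := by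
        rw [hMc, map_pow_ofReal]
        simp only [Matrix.map_apply, Complex.norm_real, Real.norm_eq_abs]
        exact le_abs_self _
      exact he.trans (entry_abs_le_nnnorm _ i₀ j)
    have h2 : ∑ j, ‖Mc ^ k‖ * z j = ‖Mc ^ k‖ * c := by rw [hc, Finset.mul_sum]
    exact (hpow k i₀).trans (by rw [← h2]; exact h1)
  -- norm bound from Gelfand
  have hnorm : ∀ k : ℕ, K ≤ k → 1 ≤ k → ‖Mc ^ k‖ ≤ r ^ k := by
    intro k hKk h1k
    have h := hK k hKk
    have hkne : (k : ℝ) ≠ 0 := by positivity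
    have h2 : ((‖Mc ^ k‖₊ : ENNReal) ^ (1/(k:ℝ))) ^ (k:ℝ)
        ≤ (ENNReal.ofReal r) ^ (k:ℝ) := ENNReal.rpow_le_rpow h.le (by positivity)
    rw [← ENNReal.rpow_mul] at h2
    have : (1/(k:ℝ)) * (k:ℝ) = 1 := by field_simp
    rw [this, ENNReal.rpow_one] at h2
    have h3 : (ENNReal.ofReal r) ^ (k:ℝ) = ENNReal.ofReal (r ^ k) := by
      rw [ENNReal.ofReal_rpow_of_pos hrpos, Real.rpow_natCast]
    rw [h3, ← enorm_eq_nnnorm, ← ofReal_norm] at h2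
    rwa [ENNReal.ofReal_le_ofReal_iff (by positivity)] at h2
  -- contradiction
  have hquot : Tendsto (fun k : ℕ => (s / r) ^ k) atTop atTop :=
    tendsto_pow_atTop_atTop_of_one_lt (by rw [one_lt_div hrpos]; exact hr2)
  have hcontr : ∀ᶠ k : ℕ in atTop, c / z i₀ < (s / r) ^ k :=
    hquot.eventually_gt_atTop _
  obtain ⟨k, hk1, hk2⟩ := (hcontr.and (eventually_ge_atTop (max K 1))).exists
  have hKk : K ≤ k := le_trans (le_max_left _ _) hk2
  have h1k : 1 ≤ k := le_trans (le_max_right _ _) hk2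
  have hb := hbound k
  have hn := hnorm k hKk h1k
  have hrk : (0:ℝ) < r ^ k := by positivity
  have : s ^ k * z i₀ ≤ r ^ k * c :=
    hb.trans (mul_le_mul_of_nonneg_right hn hczero)
  have hfin : (s / r) ^ k ≤ c / z i₀ := by
    rw [div_pow, div_le_div_iff₀ hrk hz0]
    nlinarith
  linarith [hk1, hfin]

end SPEC

section BLOCK
variable {n : ℕ}


lemma fromBlocks_map_ofReal (B C : Matrix (Fin n) (Fin n) ℝ) :
    (Matrix.fromBlocks B C 1 0).map Complex.ofReal
      = Matrix.fromBlocks (B.map Complex.ofReal) (C.map Complex.ofReal)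
          (1 : Matrix (Fin n) (Fin n) ℂ) (0 : Matrix (Fin n) (Fin n) ℂ) := by
  rw [Matrix.fromBlocks_map]
  congr 1 <;> ext i j <;> simp [Matrix.map_apply, Matrix.one_apply, apply_ite]

lemma pencil (B C : Matrix (Fin n) (Fin n) ℝ)
    (hB : ∀ i j, 0 ≤ B i j) (hC : ∀ i j, 0 ≤ C i j) (lam : ℂ)
    (hlam : lam ∈ spectrum ℂ ((Matrix.fromBlocks B C (1 : Matrix (Fin n) (Fin n) ℝ)
      (0 : Matrix (Fin n) (Fin n) ℝ)).map Complex.ofReal))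
    (hne : lam ≠ 0) :
    ∃ w : Fin n → ℝ, (∀ i, 0 ≤ w i) ∧ w ≠ 0 ∧
      ∀ i, (‖lam‖)^2 * w i
        ≤ ‖lam‖ * (B.mulVec w) i + (C.mulVec w) i := by
  obtain ⟨v, hv, hmv⟩ := eigvec_of_mem_spectrum hlam
  rw [fromBlocks_map_ofReal] at hmv
  set x : Fin n → ℂ := fun i => v (Sum.inl i) with hx
  set y : Fin n → ℂ := fun i => v (Sum.inr i) with hy
  have hvelim : v = Sum.elim x y := by
    funext i; cases i <;> rfl
  rw [hvelim, Matrix.fromBlocks_mulVec] at hmv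
  have htop : ∀ i, (B.map Complex.ofReal).mulVec x i + (C.map Complex.ofReal).mulVec y i
      = lam * x i := by
    intro i
    have := congrFun hmv (Sum.inl i)
    simpa using this
  have hbot : ∀ i, x i = lam * y i := by
    intro i
    have := congrFun hmv (Sum.inr i)
    simpa [Matrix.one_mulVec] using this
  have hyne : y ≠ 0 := by
    intro h0
    apply hv
    rw [hvelim]
    have hx0 : x = 0 := by
      funext i; rw [hbot i, h0]; simp
    rw [hx0, h0]
    simp
  refine ⟨fun i => ‖y i‖, fun i => norm_nonneg _, ?_, ?_⟩
  · intro h0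
    apply hyne
    funext i
    have := congrFun h0 i
    simp only [Pi.zero_apply] at this ⊢
    exact norm_eq_zero.mp this
  · intro i
    have heq : lam^2 * y i = (B.map Complex.ofReal).mulVec x i
        + (C.map Complex.ofReal).mulVec y i := by
      rw [htop i, hbot i]; ring
    have habs : ‖lam^2 * y i‖
        = (‖lam‖)^2 * ‖y i‖ := by
      simp [_root_.map_mul, _root_.map_pow]
    calc (‖lam‖)^2 * ‖y i‖
        = ‖(B.map Complex.ofReal).mulVec x i
            + (C.map Complex.ofReal).mulVec y i‖ := by rw [← heq, habs]
      _ ≤ ‖(B.map Complex.ofReal).mulVec x i‖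
          + ‖(C.map Complex.ofReal).mulVec y i‖ := norm_add_le _ _
      _ ≤ ‖lam‖ * (B.mulVec (fun j => ‖y j‖)) i
          + (C.mulVec (fun j => ‖y j‖)) i := by
        gcongr
        · calc ‖(B.map Complex.ofReal).mulVec x i‖
              = ‖∑ j, (B i j : ℂ) * x j‖ := rfl
            _ ≤ ∑ j, ‖(B i j : ℂ) * x j‖ := norm_sum_le _ _
            _ = ∑ j, B i j * (‖lam‖ * ‖y j‖) := by
                refine Finset.sum_congr rfl fun j _ => ?_
                rw [norm_mul, hbot j, norm_mul]
                simp only [Complex.norm_real, Real.norm_eq_abs, abs_of_nonneg (hB i j)]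
            _ = ‖lam‖ * (B.mulVec (fun j => ‖y j‖)) i := by
                rw [Matrix.mulVec, dotProduct, Finset.mul_sum]
                refine Finset.sum_congr rfl fun j _ => by ring
        · calc ‖(C.map Complex.ofReal).mulVec y i‖
              = ‖∑ j, (C i j : ℂ) * y j‖ := rfl
            _ ≤ ∑ j, ‖(C i j : ℂ) * y j‖ := norm_sum_le _ _
            _ = (C.mulVec (fun j => ‖y j‖)) i := by
                refine Finset.sum_congr rfl fun j _ => ?_
                rw [norm_mul]
                simp [Complex.norm_real, Real.norm_eq_abs, abs_of_nonneg (hC i j)]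

end BLOCK

section BLOCK2
variable {n : ℕ}

lemma fromBlocks_nonneg {B C : Matrix (Fin n) (Fin n) ℝ}
    (hB : ∀ i j, 0 ≤ B i j) (hC : ∀ i j, 0 ≤ C i j) :
    ∀ i j, 0 ≤ (Matrix.fromBlocks B C (1 : Matrix (Fin n) (Fin n) ℝ)
      (0 : Matrix (Fin n) (Fin n) ℝ)) i j := by
  intro i j
  cases i with
  | inl i => cases j with
    | inl j => simpa using hB i j
    | inr j => simpa using hC i j
  | inr i => cases j with
    | inl j =>
      simp only [Matrix.fromBlocks_apply₂₁, Matrix.one_apply]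
      split_ifs <;> norm_num
    | inr j => simp

lemma block_lt_one (B C : Matrix (Fin n) (Fin n) ℝ)
    (hB : ∀ i j, 0 ≤ B i j) (hC : ∀ i j, 0 ≤ C i j)
    (hpow : ∀ i j, Filter.Tendsto (fun k : ℕ => ((B + C) ^ k) i j) atTop (nhds 0)) :
    specRad (Matrix.fromBlocks B C (1 : Matrix (Fin n) (Fin n) ℝ)
      (0 : Matrix (Fin n) (Fin n) ℝ)) < 1 := by
  rcases Nat.eq_zero_or_pos n with hn | hn
  · subst hn
    rw [specRad_of_isEmpty]
    norm_num
  haveI : Nonempty (Fin n) := ⟨⟨0, hn⟩⟩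
  by_contra hcon
  push_neg at hcon
  obtain ⟨lam, hlam, habs⟩ := specRad_attained
    (Matrix.fromBlocks B C (1 : Matrix (Fin n) (Fin n) ℝ) (0 : Matrix (Fin n) (Fin n) ℝ))
  set s := specRad (Matrix.fromBlocks B C (1 : Matrix (Fin n) (Fin n) ℝ)
      (0 : Matrix (Fin n) (Fin n) ℝ)) with hs
  have hs1 : 1 ≤ s := hcon
  have hspos : 0 < s := lt_of_lt_of_le one_pos hs1
  have hlamne : lam ≠ 0 := by
    intro h0
    refine hspos.ne' ?_
    rw [← habs, h0]
    simp
  obtain ⟨w, hw0, hwne, hineq⟩ := pencil B C hB hC lam hlam hlamne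
  obtain ⟨i₀, hi₀⟩ : ∃ i, 0 < w i := by
    by_contra hno
    push_neg at hno
    exact hwne (funext fun i => le_antisymm (hno i) (hw0 i))
  have key : ∀ i, s * w i ≤ (B + C).mulVec w i := by
    intro i
    have h1 := hineq i
    rw [habs] at h1
    have hCw : 0 ≤ C.mulVec w i := by
      rw [show C.mulVec w i = ∑ j, C i j * w j from rfl]
      exact Finset.sum_nonneg fun j _ => mul_nonneg (hC i j) (hw0 j)
    have hBw : 0 ≤ B.mulVec w i := by
      rw [show B.mulVec w i = ∑ j, B i j * w j from rfl]
      exact Finset.sum_nonneg fun j _ => mul_nonneg (hB i j) (hw0 j)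
    have h2 : s * (s * w i) ≤ s * (B.mulVec w i + C.mulVec w i) := by
      nlinarith
    have h3 : s * w i ≤ B.mulVec w i + C.mulVec w i :=
      le_of_mul_le_mul_left h2 hspos
    rw [Matrix.add_mulVec]
    simpa using h3
  have hpows := pow_subeig (M := B + C)
    (fun i j => by simpa using add_nonneg (hB i j) (hC i j)) hw0 hspos.le key
  have htends : Filter.Tendsto (fun k : ℕ => ((B + C) ^ k).mulVec w i₀) atTop (nhds 0) := by
    have : ∀ k : ℕ, ((B + C) ^ k).mulVec w i₀ = ∑ j, ((B + C) ^ k) i₀ j * w j := fun k => rfl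
    simp only [this]
    have h0 : (0:ℝ) = ∑ j : Fin n, 0 * w j := by simp
    rw [h0]
    exact tendsto_finset_sum _ fun j _ => (hpow i₀ j).mul_const (w j)
  have hev : ∀ᶠ k : ℕ in atTop, ((B + C) ^ k).mulVec w i₀ < w i₀ :=
    htends.eventually_lt_const hi₀
  obtain ⟨k, hk⟩ := hev.exists
  have h5 : w i₀ ≤ s ^ k * w i₀ := by
    nlinarith [one_le_pow₀ hs1 (n := k), hi₀]
  linarith [hpows k i₀]

lemma block_cmp (B1 C1 B2 C2 : Matrix (Fin n) (Fin n) ℝ)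
    (hB1 : ∀ i j, 0 ≤ B1 i j) (hC1 : ∀ i j, 0 ≤ C1 i j)
    (hB2 : ∀ i j, 0 ≤ B2 i j) (hC2 : ∀ i j, 0 ≤ C2 i j)
    (hE : ∀ i j, (B1 + C1) i j ≤ (B2 + C2) i j)
    (hBle : ∀ i j, B2 i j ≤ B1 i j)
    (hs1 : specRad (Matrix.fromBlocks B1 C1 (1 : Matrix (Fin n) (Fin n) ℝ)
      (0 : Matrix (Fin n) (Fin n) ℝ)) ≤ 1) :
    specRad (Matrix.fromBlocks B1 C1 (1 : Matrix (Fin n) (Fin n) ℝ)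
      (0 : Matrix (Fin n) (Fin n) ℝ))
      ≤ specRad (Matrix.fromBlocks B2 C2 (1 : Matrix (Fin n) (Fin n) ℝ)
      (0 : Matrix (Fin n) (Fin n) ℝ)) := by
  rcases Nat.eq_zero_or_pos n with hn | hn
  · subst hn
    rw [specRad_of_isEmpty, specRad_of_isEmpty]
  haveI : Nonempty (Fin n) := ⟨⟨0, hn⟩⟩
  set s := specRad (Matrix.fromBlocks B1 C1 (1 : Matrix (Fin n) (Fin n) ℝ)
      (0 : Matrix (Fin n) (Fin n) ℝ)) with hsdef
  have hsnn : 0 ≤ s := specRad_nonneg _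
  rcases eq_or_lt_of_le hsnn with hszero | hspos
  · rw [← hszero]
    exact specRad_nonneg _
  obtain ⟨lam, hlam, habs⟩ := specRad_attained
    (Matrix.fromBlocks B1 C1 (1 : Matrix (Fin n) (Fin n) ℝ) (0 : Matrix (Fin n) (Fin n) ℝ))
  have hlamne : lam ≠ 0 := by
    intro h0
    refine hspos.ne' ?_
    rw [hsdef, ← habs, h0]
    simp
  obtain ⟨w, hw0, hwne, hineq⟩ := pencil B1 C1 hB1 hC1 lam hlam hlamne
  obtain ⟨i₀, hi₀⟩ : ∃ i, 0 < w i := by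
    by_contra hno
    push_neg at hno
    exact hwne (funext fun i => le_antisymm (hno i) (hw0 i))
  have hC12 : ∀ i j, C1 i j ≤ C2 i j := by
    intro i j
    have h1 := hE i j
    have h2 := hBle i j
    simp only [Matrix.add_apply] at h1
    linarith
  have key : ∀ i, s * (s * w i) ≤ s * (B2.mulVec w) i + (C2.mulVec w) i := by
    intro i
    have h1 := hineq i
    rw [habs, ← hsdef] at h1
    have h2 : s * (B1.mulVec w) i + (C1.mulVec w) i
        ≤ s * (B2.mulVec w) i + (C2.mulVec w) i := by
      have hl : ∀ M : Matrix (Fin n) (Fin n) ℝ, s * (M.mulVec w) i = ∑ j, s * M i j * w j := by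
        intro M
        simp only [Matrix.mulVec, dotProduct, Finset.mul_sum]
        exact Finset.sum_congr rfl fun j _ => by ring
      have hl0 : ∀ M : Matrix (Fin n) (Fin n) ℝ, (M.mulVec w) i = ∑ j, M i j * w j :=
        fun M => rfl
      rw [hl B1, hl B2, hl0 C1, hl0 C2, ← Finset.sum_add_distrib, ← Finset.sum_add_distrib]
      refine Finset.sum_le_sum fun j _ => ?_
      have hscal : s * B1 i j + C1 i j ≤ s * B2 i j + C2 i j := by
        have he := hE i j
        simp only [Matrix.add_apply] at he
        have hc := hC12 i j
        nlinarith [mul_le_mul_of_nonneg_left he hsnn,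
          mul_le_mul_of_nonneg_left hc (sub_nonneg.mpr hs1)]
      have := mul_le_mul_of_nonneg_right hscal (hw0 j)
      nlinarith [this]
    calc s * (s * w i) = s ^ 2 * w i := by ring
      _ ≤ s * (B1.mulVec w) i + (C1.mulVec w) i := h1
      _ ≤ _ := h2
  -- build sub-eigenvector for the second block matrix
  set z : Fin n ⊕ Fin n → ℝ := Sum.elim (fun i => s * w i) w with hz
  have hznn : ∀ i, 0 ≤ z i := by
    intro i
    cases i with
    | inl i => exact mul_nonneg hsnn (hw0 i)
    | inr i => exact hw0 i
  have hzpos : 0 < z (Sum.inr i₀) := hi₀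
  have hWnn := fromBlocks_nonneg hB2 hC2
  have hsub : ∀ i, s * z i
      ≤ ((Matrix.fromBlocks B2 C2 (1 : Matrix (Fin n) (Fin n) ℝ)
        (0 : Matrix (Fin n) (Fin n) ℝ)).mulVec z) i := by
    have hmv : (Matrix.fromBlocks B2 C2 (1 : Matrix (Fin n) (Fin n) ℝ)
        (0 : Matrix (Fin n) (Fin n) ℝ)).mulVec z
        = Sum.elim (B2.mulVec (fun i => s * w i) + C2.mulVec w)
            ((1 : Matrix (Fin n) (Fin n) ℝ).mulVec (fun i => s * w i)
              + (0 : Matrix (Fin n) (Fin n) ℝ).mulVec w) := by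
      rw [hz, Matrix.fromBlocks_mulVec]
      simp
    intro i
    rw [hmv]
    cases i with
    | inl i =>
      have hB2s : B2.mulVec (fun j => s * w j) i = s * (B2.mulVec w) i := by
        simp only [Matrix.mulVec, dotProduct, Finset.mul_sum]
        exact Finset.sum_congr rfl fun j _ => by ring
      have := key i
      simp only [Sum.elim_inl, Pi.add_apply, hB2s, hz]
      linarith
    | inr i =>
      simp [hz, Matrix.one_mulVec]
  exact subeig_le_specRad hWnn hznn hzpos hsnn hsub

end BLOCK2

theorem tgads_pair_comparison_W12_W34 {m n : ℕ}
    (A P₁ R₁ S₁ P₂ R₂ S₂ P₃ R₃ S₃ P₄ R₄ S₄ : Matrix (Fin m) (Fin n) ℝ)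
    (XA X₁ X₂ X₃ X₄ Xhat₁ Xhat₂ : Matrix (Fin n) (Fin m) ℝ)
    (hX₁ : IsMP P₁ X₁)
    (hX₂ : IsMP P₂ X₂)
    (hX₃ : IsMP P₃ X₃)
    (hX₄ : IsMP P₄ X₄)
    (hXA : IsMP A XA)
    (hsemi : MatLE 0 XA)
    (hsplit₁ : A = P₁ - R₁ + S₁)
    (hrange₁ : LinearMap.range (P₁).mulVecLin = LinearMap.range (A).mulVecLin)
    (hker₁ : LinearMap.ker (P₁).mulVecLin = LinearMap.ker (A).mulVecLin)
    (hwr₁a : MatLE 0 X₁)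
    (hwr₁b : MatLE 0 (X₁ * R₁))
    (hwr₁c : MatLE (X₁ * S₁) 0)
    (hsplit₂ : A = P₂ - R₂ + S₂)
    (hrange₂ : LinearMap.range (P₂).mulVecLin = LinearMap.range (A).mulVecLin)
    (hker₂ : LinearMap.ker (P₂).mulVecLin = LinearMap.ker (A).mulVecLin)
    (hwr₂a : MatLE 0 X₂)
    (hwr₂b : MatLE 0 (X₂ * R₂))
    (hwr₂c : MatLE (X₂ * S₂) 0)
    (hsplit₃ : A = P₃ - R₃ + S₃)
    (hrange₃ : LinearMap.range (P₃).mulVecLin = LinearMap.range (A).mulVecLin)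
    (hker₃ : LinearMap.ker (P₃).mulVecLin = LinearMap.ker (A).mulVecLin)
    (hwr₃a : MatLE 0 X₃)
    (hwr₃b : MatLE 0 (X₃ * R₃))
    (hwr₃c : MatLE (X₃ * S₃) 0)
    (hsplit₄ : A = P₄ - R₄ + S₄)
    (hrange₄ : LinearMap.range (P₄).mulVecLin = LinearMap.range (A).mulVecLin)
    (hker₄ : LinearMap.ker (P₄).mulVecLin = LinearMap.ker (A).mulVecLin)
    (hwr₄a : MatLE 0 X₄)
    (hwr₄b : MatLE 0 (X₄ * R₄))
    (hwr₄c : MatLE (X₄ * S₄) 0)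
    (hNS2 : LinearMap.ker (P₂).mulVecLin ≤ LinearMap.ker (S₂).mulVecLin)
    (hRS2 : LinearMap.range (S₂).mulVecLin ≤ LinearMap.range (P₂).mulVecLin)
    (hNS4 : LinearMap.ker (P₄).mulVecLin ≤ LinearMap.ker (S₄).mulVecLin)
    (hRS4 : LinearMap.range (S₄).mulVecLin ≤ LinearMap.range (P₄).mulVecLin)
    (hunit1 : IsUnit (1 - S₂ * X₁))
    (hunit2 : IsUnit (1 - S₄ * X₃))
    (hXhat1 : IsMP ((1 - S₂ * X₁) * A) Xhat₁)
    (hXhat2 : IsMP ((1 - S₄ * X₃) * A) Xhat₂)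
    (hXhat1pos : MatLE 0 Xhat₁)
    (hXhat2pos : MatLE 0 Xhat₂)
    (hc1 : MatLE (X₄ * ((1 - S₄ * X₃) * A)) (X₂ * ((1 - S₂ * X₁) * A)))
    (hc2 : MatLE (X₄ * (R₄ - S₄ * X₃ * R₃)) (X₂ * (R₂ - S₂ * X₁ * R₁)))
    : specRad (Matrix.fromBlocks (X₂ * R₂ - X₂ * S₂ * X₁ * R₁) (X₂ * S₂ * X₁ * S₁) 1 0) ≤ specRad (Matrix.fromBlocks (X₄ * R₄ - X₄ * S₄ * X₃ * R₃) (X₄ * S₄ * X₃ * S₃) 1 0) ∧ specRad (Matrix.fromBlocks (X₄ * R₄ - X₄ * S₄ * X₃ * R₃) (X₄ * S₄ * X₃ * S₃) 1 0) < 1 := by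
  obtain ⟨c1eq, c1pos, c1tend⟩ :=
    core A P₁ R₁ S₁ P₂ R₂ S₂ X₁ X₂ Xhat₁ hX₁ hX₂ hsplit₁ hsplit₂ hker₁ hrange₂ hker₂
      hNS2 hRS2 hunit1 hXhat1 hwr₂a hwr₂b hwr₂c hwr₁b hwr₁c hXhat1pos
  obtain ⟨c2eq, c2pos, c2tend⟩ :=
    core A P₃ R₃ S₃ P₄ R₄ S₄ X₃ X₄ Xhat₂ hX₃ hX₄ hsplit₃ hsplit₄ hker₃ hrange₄ hker₄
      hNS4 hRS4 hunit2 hXhat2 hwr₄a hwr₄b hwr₄c hwr₃b hwr₃c hXhat2pos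
  set B₁ := X₂ * R₂ - X₂ * S₂ * X₁ * R₁ with hB₁def
  set C₁ := X₂ * S₂ * X₁ * S₁ with hC₁def
  set B₂ := X₄ * R₄ - X₄ * S₄ * X₃ * R₃ with hB₂def
  set C₂ := X₄ * S₄ * X₃ * S₃ with hC₂def
  have hH1 : X₂ * (R₂ - S₂ * X₁ * R₁ + S₂ * X₁ * S₁) = B₁ + C₁ := by
    rw [hB₁def, hC₁def, Matrix.mul_add, Matrix.mul_sub]
    simp [Matrix.mul_assoc]
  have hH2 : X₄ * (R₄ - S₄ * X₃ * R₃ + S₄ * X₃ * S₃) = B₂ + C₂ := by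
    rw [hB₂def, hC₂def, Matrix.mul_add, Matrix.mul_sub]
    simp [Matrix.mul_assoc]
  -- individual nonnegativity
  have hB₁pos : ∀ i j, 0 ≤ B₁ i j := by
    intro i j
    have h1 := hwr₂b i j
    have h2 := matle_mul_mixed hwr₂c hwr₁b i j
    have hrw : B₁ i j = (X₂ * R₂) i j - ((X₂ * S₂) * (X₁ * R₁)) i j := by
      rw [hB₁def]
      simp [Matrix.sub_apply, Matrix.mul_assoc]
    rw [hrw]
    simp only [Matrix.zero_apply] at h1 h2
    linarith
  have hC₁pos : ∀ i j, 0 ≤ C₁ i j := by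
    intro i j
    have h3 := matle_mul_nonpos hwr₂c hwr₁c i j
    have hrw : C₁ i j = ((X₂ * S₂) * (X₁ * S₁)) i j := by
      rw [hC₁def]; simp [Matrix.mul_assoc]
    rw [hrw]
    simpa using h3
  have hB₂pos : ∀ i j, 0 ≤ B₂ i j := by
    intro i j
    have h1 := hwr₄b i j
    have h2 := matle_mul_mixed hwr₄c hwr₃b i j
    have hrw : B₂ i j = (X₄ * R₄) i j - ((X₄ * S₄) * (X₃ * R₃)) i j := by
      rw [hB₂def]
      simp [Matrix.sub_apply, Matrix.mul_assoc]
    rw [hrw]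
    simp only [Matrix.zero_apply] at h1 h2
    linarith
  have hC₂pos : ∀ i j, 0 ≤ C₂ i j := by
    intro i j
    have h3 := matle_mul_nonpos hwr₄c hwr₃c i j
    have hrw : C₂ i j = ((X₄ * S₄) * (X₃ * S₃)) i j := by
      rw [hC₂def]; simp [Matrix.mul_assoc]
    rw [hrw]
    simpa using h3
  -- powers tend to zero, restated
  have hT1 : ∀ i j, Filter.Tendsto (fun k : ℕ => ((B₁ + C₁) ^ k) i j) atTop (nhds 0) := by
    intro i j
    have := c1tend i j
    rw [hH1] at this
    exact this
  have hT2 : ∀ i j, Filter.Tendsto (fun k : ℕ => ((B₂ + C₂) ^ k) i j) atTop (nhds 0) := by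
    intro i j
    have := c2tend i j
    rw [hH2] at this
    exact this
  -- strict bounds
  have hlt1 : specRad (Matrix.fromBlocks B₁ C₁ (1 : Matrix (Fin n) (Fin n) ℝ)
      (0 : Matrix (Fin n) (Fin n) ℝ)) < 1 := block_lt_one B₁ C₁ hB₁pos hC₁pos hT1
  have hlt2 : specRad (Matrix.fromBlocks B₂ C₂ (1 : Matrix (Fin n) (Fin n) ℝ)
      (0 : Matrix (Fin n) (Fin n) ℝ)) < 1 := block_lt_one B₂ C₂ hB₂pos hC₂pos hT2
  -- equal projectors
  have hQ : X₂ * P₂ = X₄ * P₄ := by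
    have k24 : LinearMap.ker P₂.mulVecLin ≤ LinearMap.ker P₄.mulVecLin := by
      rw [hker₂, ← hker₄]
    have k42 : LinearMap.ker P₄.mulVecLin ≤ LinearMap.ker P₂.mulVecLin := by
      rw [hker₄, ← hker₂]
    have p2 : P₂ * ((1 : Matrix (Fin n) (Fin n) ℝ) - X₂ * P₂) = 0 := by
      rw [Matrix.mul_sub, Matrix.mul_one, ← Matrix.mul_assoc, hX₂.1, sub_self]
    have p4 : P₄ * ((1 : Matrix (Fin n) (Fin n) ℝ) - X₄ * P₄) = 0 := by
      rw [Matrix.mul_sub, Matrix.mul_one, ← Matrix.mul_assoc, hX₄.1, sub_self]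
    have q1 : P₄ * ((1 : Matrix (Fin n) (Fin n) ℝ) - X₂ * P₂) = 0 := ker_imp k24 p2
    have q2 : P₂ * ((1 : Matrix (Fin n) (Fin n) ℝ) - X₄ * P₄) = 0 := ker_imp k42 p4
    rw [Matrix.mul_sub, Matrix.mul_one, sub_eq_zero] at q1 q2
    -- q1 : P₄ = P₄ * (X₂ * P₂), q2 : P₂ = P₂ * (X₄ * P₄)
    have e1 : (X₄ * P₄) * (X₂ * P₂) = X₄ * P₄ := by
      rw [Matrix.mul_assoc X₄ P₄ (X₂ * P₂), ← q1]
    have e2 : (X₂ * P₂) * (X₄ * P₄) = X₂ * P₂ := by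
      rw [Matrix.mul_assoc X₂ P₂ (X₄ * P₄), ← q2]
    have t2 : (X₂ * P₂)ᵀ = X₂ * P₂ := hX₂.2.2.2
    have t4 : (X₄ * P₄)ᵀ = X₄ * P₄ := hX₄.2.2.2
    calc X₂ * P₂ = (X₂ * P₂) * (X₄ * P₄) := e2.symm
      _ = ((X₄ * P₄)ᵀ * (X₂ * P₂)ᵀ)ᵀ := by rw [← Matrix.transpose_mul, transpose_transpose]
      _ = ((X₄ * P₄) * (X₂ * P₂))ᵀ := by rw [t2, t4]
      _ = X₄ * P₄ := by rw [e1, t4]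
  -- E comparison
  have hE : ∀ i j, (B₁ + C₁) i j ≤ (B₂ + C₂) i j := by
    intro i j
    have h := hc1 i j
    rw [c1eq, c2eq, hH1, hH2, hQ] at h
    simp only [Matrix.sub_apply] at h
    linarith
  -- B comparison
  have hBle : ∀ i j, B₂ i j ≤ B₁ i j := by
    intro i j
    have h := hc2 i j
    have e1 : X₂ * (R₂ - S₂ * X₁ * R₁) = B₁ := by
      rw [hB₁def, Matrix.mul_sub]
      simp [Matrix.mul_assoc]
    have e2 : X₄ * (R₄ - S₄ * X₃ * R₃) = B₂ := by
      rw [hB₂def, Matrix.mul_sub]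
      simp [Matrix.mul_assoc]
    rw [e1, e2] at h
    exact h
  refine ⟨?_, hlt2⟩
  exact block_cmp B₁ C₁ B₂ C₂ hB₁pos hC₁pos hB₂pos hC₂pos hE hBle hlt1.le
end
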